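/- arXiv:0907.2545 — 5 statements merged into one kernel-verified Lean document; each statement's English description precedes it below -/
import Mathlib

section
/- Let P(z) = Σ_{j=0}^m z^j A_j be a matrix polynomial with coefficients A_j ∈ ℂ^{n×n} such that every coefficient satisfies A_jᵀ = A_j or A_jᵀ = −A_j. Let λ ∈ ℂ and x ∈ ℂⁿ with x^H x = 1, and set r := −P(λ)x and Λ_m := (1, λ, …, λ^m)ᵀ ∈ ℂ^{m+1}. For each j define ΔA_j := −x̄ xᵀ A_j x x^H + (conj(λ^j)/‖Λ_m‖₂²)·(x̄ rᵀ + r x^H − 2 (rᵀx) x̄ x^H) if A_jᵀ = A_j, and ΔA_j := −(conj(λ^j)/‖Λ_m‖₂²)·(x̄ rᵀ − r x^H) if A_jᵀ = −A_j. Then the polynomial ΔP(z) := Σ_{j=0}^m z^j ΔA_j satisfies P(λ)x + ΔP(λ)x = 0, and moreover ΔA_jᵀ = ΔA_j whenever A_jᵀ = A_j and ΔA_jᵀ = −ΔA_j whenever A_jᵀ = −A_j (so if P is symmetric, skew-symmetric, T-even or T-odd, then ΔP has the same structure). -/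
open scoped ComplexConjugate
open Matrix

noncomputable section

variable {ι : Type*} [Fintype ι] [DecidableEq ι]

/-- Evaluation of the matrix polynomial with coefficient list `A` at the point `z`. -/
def polyEval {m : ℕ} (A : Fin (m+1) → Matrix ι ι ℂ) (z : ℂ) : Matrix ι ι ℂ :=
  ∑ j : Fin (m+1), z ^ (j : ℕ) • A j

/-- Squared Euclidean norm of a complex vector. -/
def vecNormSq (x : ι → ℂ) : ℝ := ∑ i, ‖x i‖ ^ 2

/-- Euclidean norm of a complex vector. -/
def vecNorm (x : ι → ℂ) : ℝ := Real.sqrt (vecNormSq x)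

/-- `‖(1, z, …, z^m)‖₂²`. -/
def lamNormSq (m : ℕ) (z : ℂ) : ℝ := ∑ j : Fin (m+1), ‖z ^ (j : ℕ)‖ ^ 2

/-- Squared Frobenius norm of a matrix. -/
def frobNormSq (M : Matrix ι ι ℂ) : ℝ := ∑ i, ∑ k, ‖M i k‖ ^ 2

/-- Spectral (operator 2-) norm of a matrix. -/
def specNorm (M : Matrix ι ι ℂ) : ℝ := ‖Matrix.toEuclideanCLM (𝕜 := ℂ) M‖

/-- Frobenius norm of a matrix polynomial: `(Σ_j ‖A_j‖_F²)^{1/2}`. -/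
def polyNormF {m : ℕ} (A : Fin (m+1) → Matrix ι ι ℂ) : ℝ :=
  Real.sqrt (∑ j, frobNormSq (A j))

/-- Spectral norm of a matrix polynomial: `(Σ_j ‖A_j‖₂²)^{1/2}`. -/
def polyNorm2 {m : ℕ} (A : Fin (m+1) → Matrix ι ι ℂ) : ℝ :=
  Real.sqrt (∑ j, specNorm (A j) ^ 2)

/-- Structured backward error of `(lam, x)` as an approximate eigenpair of the matrix
polynomial `A`, with respect to the polynomial norm `N` and the structure class `S`. -/
def eta {m : ℕ} (N : (Fin (m+1) → Matrix ι ι ℂ) → ℝ)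
    (S : Set (Fin (m+1) → Matrix ι ι ℂ)) (lam : ℂ) (x : ι → ℂ)
    (A : Fin (m+1) → Matrix ι ι ℂ) : ℝ :=
  sInf {t | ∃ ΔA ∈ S, (polyEval A lam + polyEval ΔA lam) *ᵥ x = 0 ∧ t = N ΔA}

/-- A matrix polynomial is regular if `det P(z) ≠ 0` for some `z`. -/
def Regular {m : ℕ} (A : Fin (m+1) → Matrix ι ι ℂ) : Prop :=
  ∃ z : ℂ, (polyEval A z).det ≠ 0


lemma my_vecMulVec_transpose {n : ℕ} (w v : Fin n → ℂ) :
    (vecMulVec w v)ᵀ = vecMulVec v w := by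
  ext i j; simp [vecMulVec_apply, mul_comm]

lemma my_vecMulVec_mulVec {n : ℕ} (w v x : Fin n → ℂ) :
    vecMulVec w v *ᵥ x = (v ⬝ᵥ x) • w := by
  ext i
  simp [mulVec, dotProduct, vecMulVec_apply, Finset.sum_mul, Finset.mul_sum]
  exact Finset.sum_congr rfl fun k _ => by ring

lemma my_skew_quad {n : ℕ} (M : Matrix (Fin n) (Fin n) ℂ) (h : Mᵀ = -M) (x : Fin n → ℂ) :
    x ⬝ᵥ (M *ᵥ x) = 0 := by
  have h1 : x ⬝ᵥ (M *ᵥ x) = (Mᵀ *ᵥ x) ⬝ᵥ x := by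
    rw [Matrix.dotProduct_mulVec, Matrix.mulVec_transpose]
  rw [h, Matrix.neg_mulVec, neg_dotProduct, dotProduct_comm] at h1
  rw [dotProduct_comm]
  linear_combination h1 / 2

lemma my_sum_mulVec {n N : ℕ} (M : Fin N → Matrix (Fin n) (Fin n) ℂ) (x : Fin n → ℂ) :
    (∑ j, M j) *ᵥ x = ∑ j, M j *ᵥ x := by
  ext i
  simp [mulVec, dotProduct, Matrix.sum_apply, Finset.sum_mul]
  rw [Finset.sum_comm]

lemma my_dotProduct_sum {n N : ℕ} (x : Fin n → ℂ) (v : Fin N → Fin n → ℂ) :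
    x ⬝ᵥ (∑ j, v j) = ∑ j, x ⬝ᵥ v j := by
  simp [dotProduct, Finset.mul_sum, Finset.sum_apply]
  rw [Finset.sum_comm]

/-- Existence of a structure-preserving perturbation (transpose structures):
the explicitly constructed `ΔP` satisfies `P(λ)x + ΔP(λ)x = 0` and each coefficient `ΔA_j`
is symmetric when `A_j` is (first case of the construction) and skew-symmetric when `A_j`
is (second case of the construction). -/
theorem structured_perturbation_exists_transpose {n m : ℕ}
    (A ΔA : Fin (m+1) → Matrix (Fin n) (Fin n) ℂ)
    (lam : ℂ) (x : Fin n → ℂ) (hx : star x ⬝ᵥ x = 1)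
    (r : Fin n → ℂ) (hr : r = -(polyEval A lam *ᵥ x))
    (hstruct : ∀ j : Fin (m+1), (A j)ᵀ = A j ∨ (A j)ᵀ = -(A j))
    (hΔ : ∀ j : Fin (m+1),
      ((A j)ᵀ = A j ∧
        ΔA j = -(x ⬝ᵥ (A j *ᵥ x)) • vecMulVec (star x) (star x) +
          (conj (lam ^ (j : ℕ)) / (lamNormSq m lam : ℂ)) •
            (vecMulVec (star x) r + vecMulVec r (star x)
              - (2 * (r ⬝ᵥ x)) • vecMulVec (star x) (star x))) ∨
      ((A j)ᵀ = -(A j) ∧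
        ΔA j = -((conj (lam ^ (j : ℕ)) / (lamNormSq m lam : ℂ)) •
            (vecMulVec (star x) r - vecMulVec r (star x))))) :
    (polyEval A lam + polyEval ΔA lam) *ᵥ x = 0 ∧
    (∀ j : Fin (m+1),
      ((A j)ᵀ = A j ∧ (ΔA j)ᵀ = ΔA j) ∨ ((A j)ᵀ = -(A j) ∧ (ΔA j)ᵀ = -(ΔA j))) := by
  set L : ℂ := (lamNormSq m lam : ℂ) with hLdef
  have hLpos : (0:ℝ) < lamNormSq m lam := by
    unfold lamNormSq
    refine Finset.sum_pos' (fun j _ => by positivity) ⟨0, Finset.mem_univ _, ?_⟩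
    simp
  have hL : L ≠ 0 := by
    rw [hLdef]; exact_mod_cast hLpos.ne'
  have hPAx : polyEval A lam *ᵥ x = -r := by rw [hr]; simp
  constructor
  · -- per-coefficient action
    have key : ∀ j : Fin (m+1), ΔA j *ᵥ x =
        -(x ⬝ᵥ (A j *ᵥ x)) • star x +
          (conj (lam ^ (j:ℕ)) / L) • (r - (r ⬝ᵥ x) • star x) := by
      intro j
      rcases hΔ j with ⟨hsym, hEq⟩ | ⟨hskew, hEq⟩
      · rw [hEq]
        simp only [Matrix.add_mulVec, Matrix.sub_mulVec, Matrix.smul_mulVec,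
          Matrix.neg_mulVec, my_vecMulVec_mulVec, hx]
        module
      · rw [hEq, my_skew_quad _ hskew, neg_zero, zero_smul, zero_add]
        simp only [Matrix.smul_mulVec, Matrix.sub_mulVec, Matrix.neg_mulVec,
          my_vecMulVec_mulVec, hx]
        module
    have hsum : polyEval ΔA lam *ᵥ x = r := by
      have h1 : polyEval ΔA lam *ᵥ x = ∑ j : Fin (m+1), lam ^ (j:ℕ) • (ΔA j *ᵥ x) := by
        rw [polyEval, my_sum_mulVec]
        exact Finset.sum_congr rfl fun j _ => Matrix.smul_mulVec _ _ _
      have h2 : ∀ j : Fin (m+1), lam ^ (j:ℕ) • (ΔA j *ᵥ x) =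
          (-(lam ^ (j:ℕ) * (x ⬝ᵥ (A j *ᵥ x)))) • star x +
          (lam ^ (j:ℕ) * (conj (lam ^ (j:ℕ)) / L)) • (r - (r ⬝ᵥ x) • star x) := by
        intro j; rw [key j]; module
      rw [h1, Finset.sum_congr rfl fun j _ => h2 j, Finset.sum_add_distrib,
        ← Finset.sum_smul, ← Finset.sum_smul]
      have fact1 : ∑ j : Fin (m+1), -(lam ^ (j:ℕ) * (x ⬝ᵥ (A j *ᵥ x))) = r ⬝ᵥ x := by
        have e1 : ∑ j : Fin (m+1), lam ^ (j:ℕ) * (x ⬝ᵥ (A j *ᵥ x)) =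
            x ⬝ᵥ (polyEval A lam *ᵥ x) := by
          rw [polyEval, my_sum_mulVec]
          have := my_dotProduct_sum x (fun j => (lam ^ (j:ℕ) • A j) *ᵥ x)
          rw [this]
          exact Finset.sum_congr rfl fun j _ => by
            rw [Matrix.smul_mulVec, dotProduct_smul, smul_eq_mul]
        rw [Finset.sum_neg_distrib, e1, hPAx, dotProduct_neg, neg_neg,
          dotProduct_comm]
      have fact2 : ∑ j : Fin (m+1), lam ^ (j:ℕ) * (conj (lam ^ (j:ℕ)) / L) = 1 := by
        have e2 : ∀ j : Fin (m+1), lam ^ (j:ℕ) * (conj (lam ^ (j:ℕ)) / L) =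
            ((‖lam ^ (j:ℕ)‖ ^ 2 : ℝ) : ℂ) / L := by
          intro j
          rw [mul_div_assoc', Complex.mul_conj]
          norm_cast
          rw [Complex.normSq_eq_norm_sq]
        rw [Finset.sum_congr rfl fun j _ => e2 j, ← Finset.sum_div]
        rw [div_eq_one_iff_eq hL, hLdef]
        unfold lamNormSq
        push_cast
        rfl
      rw [fact1, fact2]
      module
    rw [Matrix.add_mulVec, hPAx, hsum]
    simp
  · intro j
    rcases hΔ j with ⟨hsym, hEq⟩ | ⟨hskew, hEq⟩
    · refine Or.inl ⟨hsym, ?_⟩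
      rw [hEq]
      simp only [Matrix.transpose_add, Matrix.transpose_sub, Matrix.transpose_smul,
        Matrix.transpose_neg, my_vecMulVec_transpose]
      module
    · refine Or.inr ⟨hskew, ?_⟩
      rw [hEq]
      simp only [Matrix.transpose_sub, Matrix.transpose_smul, Matrix.transpose_neg,
        my_vecMulVec_transpose]
      module
end
end

section
/- Let P(z) = Σ_{j=0}^m z^j A_j be a matrix polynomial with coefficients A_j ∈ ℂ^{n×n} such that every coefficient satisfies A_j^H = A_j or A_j^H = −A_j. Let λ ∈ ℂ and x ∈ ℂⁿ with x^H x = 1, and set r := −P(λ)x, Λ_m := (1, λ, …, λ^m)ᵀ ∈ ℂ^{m+1}, and P_x := I − x x^H. For each j define ΔA_j := −x x^H A_j x x^H + (1/‖Λ_m‖₂²)·(λ^j x r^H P_x + conj(λ^j) P_x r x^H) if A_j^H = A_j, and ΔA_j := −x x^H A_j x x^H − (1/‖Λ_m‖₂²)·(λ^j x r^H P_x − conj(λ^j) P_x r x^H) if A_j^H = −A_j. Then the polynomial ΔP(z) := Σ_{j=0}^m z^j ΔA_j satisfies P(λ)x + ΔP(λ)x = 0, and moreover ΔA_j^H = ΔA_j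 whenever A_j^H = A_j and ΔA_j^H = −ΔA_j whenever A_j^H = −A_j (so if P is Hermitian, skew-Hermitian, H-even or H-odd, then ΔP has the same structure). -/
open scoped ComplexConjugate
open Matrix

noncomputable section

variable {ι : Type*} [Fintype ι] [DecidableEq ι]

lemma myVecMulVec_mulVec {n : ℕ} (a b c : Fin n → ℂ) :
    vecMulVec a b *ᵥ c = (b ⬝ᵥ c) • a := by
  ext i
  simp [vecMulVec_apply, mulVec, dotProduct, Finset.mul_sum, mul_assoc, mul_comm, mul_left_comm]

lemma myVecMulVec_conjTranspose {n : ℕ} (a b : Fin n → ℂ) :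
    (vecMulVec a b)ᴴ = vecMulVec (star b) (star a) := by
  ext i k
  simp [conjTranspose_apply, vecMulVec_apply, mul_comm]

lemma myStarQuad {n : ℕ} (M : Matrix (Fin n) (Fin n) ℂ) (x : Fin n → ℂ) :
    star (star x ⬝ᵥ (M *ᵥ x)) = star x ⬝ᵥ (Mᴴ *ᵥ x) := by
  simp only [dotProduct, mulVec, conjTranspose_apply, Finset.mul_sum, star_sum, star_mul',
    Pi.star_apply, star_star]
  rw [Finset.sum_comm]
  exact Finset.sum_congr rfl fun i _ => Finset.sum_congr rfl fun k _ => by ring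

lemma myDotProduct_sum {n : ℕ} {κ : Type*} (s : Finset κ) (v : Fin n → ℂ)
    (w : κ → (Fin n → ℂ)) : v ⬝ᵥ (∑ j ∈ s, w j) = ∑ j ∈ s, v ⬝ᵥ w j := by
  simp only [dotProduct, Finset.sum_apply, Finset.mul_sum]
  rw [Finset.sum_comm]

lemma mySum_mulVec {n : ℕ} {κ : Type*} (s : Finset κ) (M : κ → Matrix (Fin n) (Fin n) ℂ)
    (x : Fin n → ℂ) : (∑ j ∈ s, M j) *ᵥ x = ∑ j ∈ s, M j *ᵥ x := by
  ext i
  simp only [mulVec, dotProduct, Finset.sum_apply, Matrix.sum_apply, Finset.sum_mul]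
  rw [Finset.sum_comm]

lemma lamNormSq_ne_zero (m : ℕ) (lam : ℂ) : ((lamNormSq m lam : ℝ) : ℂ) ≠ 0 := by
  have h1 : (1:ℝ) ≤ lamNormSq m lam := by
    have := Finset.single_le_sum (f := fun j : Fin (m+1) => ‖lam ^ (j:ℕ)‖ ^ 2)
      (fun j _ => by positivity) (Finset.mem_univ 0)
    simpa [lamNormSq] using this
  have : (0:ℝ) < lamNormSq m lam := by linarith
  exact_mod_cast ne_of_gt this

/-- Existence of a structure-preserving perturbation (conjugate-transpose
structures): the explicitly constructed `ΔP` satisfies `P(λ)x + ΔP(λ)x = 0` and each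
coefficient `ΔA_j` is Hermitian when `A_j` is (first case of the construction) and
skew-Hermitian when `A_j` is (second case of the construction). -/
theorem structured_perturbation_exists_conjTranspose {n m : ℕ}
    (A ΔA : Fin (m+1) → Matrix (Fin n) (Fin n) ℂ)
    (lam : ℂ) (x : Fin n → ℂ) (hx : star x ⬝ᵥ x = 1)
    (r : Fin n → ℂ) (hr : r = -(polyEval A lam *ᵥ x))
    (Px : Matrix (Fin n) (Fin n) ℂ) (hPx : Px = 1 - vecMulVec x (star x))
    (hstruct : ∀ j : Fin (m+1), (A j)ᴴ = A j ∨ (A j)ᴴ = -(A j))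
    (hΔ : ∀ j : Fin (m+1),
      ((A j)ᴴ = A j ∧
        ΔA j = -(star x ⬝ᵥ (A j *ᵥ x)) • vecMulVec x (star x) +
          ((lamNormSq m lam : ℂ))⁻¹ •
            (lam ^ (j : ℕ) • (vecMulVec x (star r) * Px)
              + conj (lam ^ (j : ℕ)) • (Px * vecMulVec r (star x)))) ∨
      ((A j)ᴴ = -(A j) ∧
        ΔA j = -(star x ⬝ᵥ (A j *ᵥ x)) • vecMulVec x (star x) -
          ((lamNormSq m lam : ℂ))⁻¹ •
            (lam ^ (j : ℕ) • (vecMulVec x (star r) * Px)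
              - conj (lam ^ (j : ℕ)) • (Px * vecMulVec r (star x))))) :
    (polyEval A lam + polyEval ΔA lam) *ᵥ x = 0 ∧
    (∀ j : Fin (m+1),
      ((A j)ᴴ = A j ∧ (ΔA j)ᴴ = ΔA j) ∨ ((A j)ᴴ = -(A j) ∧ (ΔA j)ᴴ = -(ΔA j))) := by
  have hs : ((lamNormSq m lam : ℝ) : ℂ) ≠ 0 := lamNormSq_ne_zero m lam
  have hPxH : Pxᴴ = Px := by
    rw [hPx]
    simp [conjTranspose_sub, myVecMulVec_conjTranspose]
  have hPxx : Px *ᵥ x = 0 := by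
    rw [hPx, sub_mulVec, one_mulVec, myVecMulVec_mulVec, hx, one_smul, sub_self]
  have hPxr : Px *ᵥ r = r - (star x ⬝ᵥ r) • x := by
    rw [hPx, sub_mulVec, one_mulVec, myVecMulVec_mulVec]
  constructor
  · -- the eigen-equation
    have key : ∀ j : Fin (m+1), lam ^ (j:ℕ) • (ΔA j *ᵥ x) =
        (-(lam ^ (j:ℕ) * (star x ⬝ᵥ (A j *ᵥ x)))) • x +
          (((‖lam ^ (j:ℕ)‖ ^ 2 : ℝ) : ℂ) * ((lamNormSq m lam : ℝ) : ℂ)⁻¹) • (Px *ᵥ r) := by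
      intro j
      have hXx : (vecMulVec x (star r) * Px) *ᵥ x = 0 := by
        rw [← mulVec_mulVec, hPxx, mulVec_zero]
      have hYx : (Px * vecMulVec r (star x)) *ᵥ x = Px *ᵥ r := by
        rw [← mulVec_mulVec, myVecMulVec_mulVec, hx, one_smul]
      have hcc : lam ^ (j:ℕ) * conj (lam ^ (j:ℕ)) = ((‖lam ^ (j:ℕ)‖ ^ 2 : ℝ) : ℂ) := by
        rw [Complex.mul_conj']
        norm_cast
      rcases hΔ j with ⟨_, hE⟩ | ⟨_, hE⟩ <;>
      · rw [hE]
        simp only [add_mulVec, sub_mulVec, smul_mulVec, myVecMulVec_mulVec, hx, one_smul,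
          hXx, hYx, smul_zero, zero_add, zero_sub, smul_add, smul_sub, smul_neg, smul_smul,
          neg_mulVec, neg_smul, smul_zero, add_zero]
        rw [← hcc]
        ring_nf
    have hsum : polyEval ΔA lam *ᵥ x = r := by
      rw [polyEval, mySum_mulVec]
      simp only [smul_mulVec, key]
      rw [Finset.sum_add_distrib, ← Finset.sum_smul, ← Finset.sum_smul]
      have h1 : ∑ j : Fin (m+1), -(lam ^ (j:ℕ) * (star x ⬝ᵥ (A j *ᵥ x))) = star x ⬝ᵥ r := by
        rw [hr, dotProduct_neg]
        rw [polyEval, mySum_mulVec, myDotProduct_sum, ← Finset.sum_neg_distrib]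
        refine Finset.sum_congr rfl fun j _ => ?_
        rw [smul_mulVec, dotProduct_smul, smul_eq_mul]
      have h2 : ∑ j : Fin (m+1), (((‖lam ^ (j:ℕ)‖ ^ 2 : ℝ) : ℂ) * ((lamNormSq m lam : ℝ) : ℂ)⁻¹)
          = 1 := by
        rw [← Finset.sum_mul]
        rw [show ∑ j : Fin (m+1), ((‖lam ^ (j:ℕ)‖ ^ 2 : ℝ) : ℂ) = ((lamNormSq m lam : ℝ) : ℂ) by
          rw [lamNormSq]; push_cast; rfl]
        exact mul_inv_cancel₀ hs
      rw [h1, h2, one_smul, hPxr]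
      abel
    rw [add_mulVec, hsum, hr, add_neg_cancel]
  · -- structure preservation
    intro j
    rcases hΔ j with ⟨hA, hE⟩ | ⟨hA, hE⟩
    · left
      refine ⟨hA, ?_⟩
      have hc : star (star x ⬝ᵥ (A j *ᵥ x)) = star x ⬝ᵥ (A j *ᵥ x) := by
        rw [myStarQuad, hA]
      rw [hE]
      simp only [conjTranspose_add, conjTranspose_smul, conjTranspose_mul,
        myVecMulVec_conjTranspose, hPxH, star_star, star_neg, hc, star_inv₀,
        Complex.star_def, Complex.conj_ofReal, Complex.conj_conj]
      rw [add_comm ((starRingEnd ℂ) (lam ^ (j:ℕ)) • (Px * vecMulVec r (star x)))]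
    · right
      refine ⟨hA, ?_⟩
      have hc : star (star x ⬝ᵥ (A j *ᵥ x)) = -(star x ⬝ᵥ (A j *ᵥ x)) := by
        rw [myStarQuad, hA, neg_mulVec, dotProduct_neg]
      rw [hE]
      simp only [conjTranspose_sub, conjTranspose_add, conjTranspose_smul, conjTranspose_mul,
        myVecMulVec_conjTranspose, hPxH, star_star, star_neg, hc, star_inv₀,
        Complex.star_def, Complex.conj_ofReal, Complex.conj_conj, map_pow]
      module
end
end

section
/- Let P(z) = Σ_{j=0}^m z^j A_j with A_j ∈ ℂ^{n×n}, let λ ∈ ℂ and x ∈ ℂⁿ with x^H x = 1, and set r := −P(λ)x and Λ_m := (1, λ, …, λ^m)ᵀ. Then for both M = F and M = 2, η_M(λ, x, P) = ‖r‖₂ / ‖Λ_m‖₂, and the infimum is attained: the polynomial ΔP(z) := Σ_{j=0}^m z^j ΔA_j with ΔA_j := conj(λ^j) r x^H / ‖Λ_m‖₂² satisfies (P(λ) + ΔP(λ)) x = 0 and |||ΔP|||_F = |||ΔP|||₂ = ‖r‖₂ / ‖Λ_m‖₂. -/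
open scoped ComplexConjugate
open Matrix

noncomputable section

variable {ι : Type*} [Fintype ι] [DecidableEq ι]

namespace BEaux

variable {n : ℕ}

/-- Linear identification of plain tuples with Euclidean space. -/
def e (n : ℕ) : (Fin n → ℂ) ≃ₗ[ℂ] EuclideanSpace ℂ (Fin n) :=
  (WithLp.linearEquiv 2 ℂ (Fin n → ℂ)).symm

lemma norm_e (v : Fin n → ℂ) : ‖e n v‖ = vecNorm v := by
  rw [EuclideanSpace.norm_eq, vecNorm, vecNormSq]
  rfl

lemma vecNormSq_nonneg (v : Fin n → ℂ) : 0 ≤ vecNormSq v :=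
  Finset.sum_nonneg fun _ _ => sq_nonneg _

lemma vecNorm_nonneg (v : Fin n → ℂ) : 0 ≤ vecNorm v := Real.sqrt_nonneg _

lemma sq_vecNorm (v : Fin n → ℂ) : vecNorm v ^ 2 = vecNormSq v :=
  Real.sq_sqrt (vecNormSq_nonneg v)

lemma euclid_apply (M : Matrix (Fin n) (Fin n) ℂ) (v : Fin n → ℂ) :
    Matrix.toEuclideanCLM (𝕜 := ℂ) M (e n v) = e n (M *ᵥ v) := by
  simp [e, WithLp.linearEquiv]

lemma vecNorm_mulVec_le_spec (M : Matrix (Fin n) (Fin n) ℂ) (v : Fin n → ℂ) :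
    vecNorm (M *ᵥ v) ≤ specNorm M * vecNorm v := by
  have h := (Matrix.toEuclideanCLM (𝕜 := ℂ) M).le_opNorm (e n v)
  rwa [euclid_apply, norm_e, norm_e] at h

lemma vecNormSq_mulVec_le (M : Matrix (Fin n) (Fin n) ℂ) (v : Fin n → ℂ) :
    vecNormSq (M *ᵥ v) ≤ frobNormSq M * vecNormSq v := by
  rw [frobNormSq, vecNormSq, Finset.sum_mul]
  refine Finset.sum_le_sum fun i _ => ?_
  calc ‖(M *ᵥ v) i‖ ^ 2 ≤ (∑ k, ‖M i k‖ * ‖v k‖) ^ 2 := by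
        refine pow_le_pow_left₀ (norm_nonneg _) ?_ 2
        have h0 : (M *ᵥ v) i = ∑ k, M i k * v k := rfl
        rw [h0]
        refine le_trans (norm_sum_le _ _) (le_of_eq ?_)
        exact Finset.sum_congr rfl fun k _ => norm_mul _ _
    _ ≤ (∑ k, ‖M i k‖ ^ 2) * ∑ k, ‖v k‖ ^ 2 :=
        Finset.sum_mul_sq_le_sq_mul_sq _ _ _

lemma frobNormSq_nonneg (M : Matrix (Fin n) (Fin n) ℂ) : 0 ≤ frobNormSq M :=
  Finset.sum_nonneg fun _ _ => Finset.sum_nonneg fun _ _ => sq_nonneg _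

lemma vecNorm_mulVec_le_frob (M : Matrix (Fin n) (Fin n) ℂ) (v : Fin n → ℂ) :
    vecNorm (M *ᵥ v) ≤ Real.sqrt (frobNormSq M) * vecNorm v := by
  rw [vecNorm, vecNorm, ← Real.sqrt_mul (frobNormSq_nonneg M)]
  exact Real.sqrt_le_sqrt (vecNormSq_mulVec_le M v)

lemma specNorm_nonneg (M : Matrix (Fin n) (Fin n) ℂ) : 0 ≤ specNorm M := norm_nonneg _

lemma specNorm_le_frob (M : Matrix (Fin n) (Fin n) ℂ) :
    specNorm M ≤ Real.sqrt (frobNormSq M) := by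
  refine ContinuousLinearMap.opNorm_le_bound _ (Real.sqrt_nonneg _) ?_
  intro w
  have hw : w = e n ((e n).symm w) := ((e n).apply_symm_apply w).symm
  rw [hw, euclid_apply, norm_e, norm_e]
  exact vecNorm_mulVec_le_frob M _

set_option synthInstance.maxHeartbeats 1000000 in
lemma specNorm_smul (c : ℂ) (M : Matrix (Fin n) (Fin n) ℂ) :
    specNorm (c • M) = ‖c‖ * specNorm M := by
  have h : Matrix.toEuclideanCLM (𝕜 := ℂ) (c • M)
      = c • Matrix.toEuclideanCLM (𝕜 := ℂ) M := by
    ext1 w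
    have hw : w = e n ((e n).symm w) := ((e n).apply_symm_apply w).symm
    rw [hw, euclid_apply, ContinuousLinearMap.smul_apply, euclid_apply,
      Matrix.smul_mulVec, LinearEquiv.map_smul]
  rw [specNorm, h]
  exact norm_smul c (Matrix.toEuclideanCLM (𝕜 := ℂ) M)

end BEaux

open BEaux in
/-- The (unstructured) backward error of an approximate eigenpair equals
`‖r‖₂ / ‖Λ_m‖₂` for both the Frobenius and the spectral polynomial norm, and the infimum is
attained by the explicitly given perturbation. -/
theorem unstructured_backward_error {n m : ℕ}
    (A : Fin (m+1) → Matrix (Fin n) (Fin n) ℂ)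
    (lam : ℂ) (x : Fin n → ℂ) (hx : star x ⬝ᵥ x = 1)
    (r : Fin n → ℂ) (hr : r = -(polyEval A lam *ᵥ x))
    (ΔA : Fin (m+1) → Matrix (Fin n) (Fin n) ℂ)
    (hΔ : ∀ j : Fin (m+1),
      ΔA j = (conj (lam ^ (j : ℕ)) / (lamNormSq m lam : ℂ)) • vecMulVec r (star x)) :
    eta polyNormF Set.univ lam x A = vecNorm r / Real.sqrt (lamNormSq m lam) ∧
    eta polyNorm2 Set.univ lam x A = vecNorm r / Real.sqrt (lamNormSq m lam) ∧
    (polyEval A lam + polyEval ΔA lam) *ᵥ x = 0 ∧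
    polyNormF ΔA = vecNorm r / Real.sqrt (lamNormSq m lam) ∧
    polyNorm2 ΔA = vecNorm r / Real.sqrt (lamNormSq m lam) := by
  set L : ℝ := lamNormSq m lam with hLdef
  -- positivity of L
  have hL1 : (1 : ℝ) ≤ L := by
    have h0 := Finset.single_le_sum
      (f := fun j : Fin (m+1) => ‖lam ^ (j : ℕ)‖ ^ 2)
      (fun _ _ => sq_nonneg _) (Finset.mem_univ (0 : Fin (m+1)))
    simpa [hLdef, lamNormSq] using h0
  have hLpos : (0 : ℝ) < L := lt_of_lt_of_le one_pos hL1
  have hLne : (L : ℂ) ≠ 0 := by exact_mod_cast ne_of_gt hLpos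
  have hsL : (0 : ℝ) < Real.sqrt L := Real.sqrt_pos.2 hLpos
  -- ‖x‖² = 1
  have hxsq : vecNormSq x = 1 := by
    have h1 : ((vecNormSq x : ℝ) : ℂ) = 1 := by
      rw [← hx]
      simp only [vecNormSq, dotProduct, Pi.star_apply, Complex.ofReal_sum]
      refine Finset.sum_congr rfl fun i _ => ?_
      rw [Complex.ofReal_pow, Complex.star_def]
      exact (Complex.conj_mul' (x i)).symm
    exact_mod_cast h1
  have hxnorm : vecNorm x = 1 := by rw [vecNorm, hxsq, Real.sqrt_one]
  -- evaluation of the explicit perturbation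
  have hΔeval : polyEval ΔA lam = vecMulVec r (star x) := by
    rw [polyEval]
    have : ∀ j : Fin (m+1),
        lam ^ (j : ℕ) • ΔA j
          = ((lam ^ (j : ℕ) * conj (lam ^ (j : ℕ))) / (L : ℂ)) • vecMulVec r (star x) := by
      intro j; rw [hΔ j, smul_smul, mul_div_assoc]
    rw [Finset.sum_congr rfl fun j _ => this j, ← Finset.sum_smul]
    have hsum : ∑ j : Fin (m+1),
        (lam ^ (j : ℕ) * conj (lam ^ (j : ℕ))) / (L : ℂ) = 1 := by
      rw [← Finset.sum_div]
      have : ∑ j : Fin (m+1), lam ^ (j : ℕ) * conj (lam ^ (j : ℕ)) = (L : ℂ) := by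
        rw [hLdef, lamNormSq, Complex.ofReal_sum]
        exact Finset.sum_congr rfl fun j _ => by
          exact_mod_cast Complex.mul_conj' (lam ^ (j : ℕ))
      rw [this, div_self hLne]
    rw [hsum, one_smul]
  have hPAx : polyEval A lam *ᵥ x = -r := by rw [hr, neg_neg]
  have hvmv : vecMulVec r (star x) *ᵥ x = r := by
    funext i
    show ∑ k, (r i * star (x k)) * x k = r i
    simp only [mul_assoc, ← Finset.mul_sum]
    have h1 : ∑ k, star (x k) * x k = (1 : ℂ) := hx
    rw [h1, mul_one]
  have hattain : (polyEval A lam + polyEval ΔA lam) *ᵥ x = 0 := by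
    rw [Matrix.add_mulVec, hPAx, hΔeval, hvmv, neg_add_cancel]
  -- Frobenius norm squared of rank-one matrix
  have hfrob1 : frobNormSq (vecMulVec r (star x)) = vecNormSq r := by
    calc frobNormSq (vecMulVec r (star x))
        = ∑ i, ∑ k, ‖r i‖ ^ 2 * ‖x k‖ ^ 2 := by
          refine Finset.sum_congr rfl fun i _ => Finset.sum_congr rfl fun k _ => ?_
          rw [Matrix.vecMulVec_apply, norm_mul, mul_pow, Pi.star_apply, norm_star]
      _ = vecNormSq r := by
          simp only [← Finset.mul_sum]
          have h2 : ∑ k, ‖x k‖ ^ 2 = 1 := hxsq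
          rw [h2]
          simp [vecNormSq]
  have hfrobj : ∀ j : Fin (m+1), frobNormSq (ΔA j) = ‖lam ^ (j : ℕ)‖ ^ 2 / L ^ 2 * vecNormSq r := by
    intro j
    rw [hΔ j]
    have hs : ∀ (c : ℂ) (M : Matrix (Fin n) (Fin n) ℂ),
        frobNormSq (c • M) = ‖c‖ ^ 2 * frobNormSq M := by
      intro c M
      simp [frobNormSq, Matrix.smul_apply, smul_eq_mul, norm_mul, mul_pow, Finset.mul_sum]
    rw [hs, hfrob1]
    congr 1
    rw [norm_div]
    simp [div_pow, Complex.norm_real, abs_of_pos hLpos]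
  have hsumF : ∑ j, frobNormSq (ΔA j) = vecNormSq r / L := by
    rw [Finset.sum_congr rfl fun j _ => hfrobj j, ← Finset.sum_mul, ← Finset.sum_div]
    rw [hLdef]
    rw [show (∑ j : Fin (m+1), ‖lam ^ (j : ℕ)‖ ^ 2) = lamNormSq m lam from rfl]
    rw [← hLdef]
    field_simp
  have hvalF : polyNormF ΔA = vecNorm r / Real.sqrt L := by
    rw [polyNormF, hsumF, vecNorm, Real.sqrt_div (vecNormSq_nonneg r) L]
  -- spectral norm of rank-one matrix
  have hspec1 : specNorm (vecMulVec r (star x)) = vecNorm r := by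
    refine le_antisymm ?_ ?_
    · refine (specNorm_le_frob _).trans_eq ?_
      rw [hfrob1]; rfl
    · have h := vecNorm_mulVec_le_spec (vecMulVec r (star x)) x
      rwa [hvmv, hxnorm, mul_one] at h
  have hspecj : ∀ j : Fin (m+1),
      specNorm (ΔA j) ^ 2 = ‖lam ^ (j : ℕ)‖ ^ 2 / L ^ 2 * vecNormSq r := by
    intro j
    rw [hΔ j, specNorm_smul, hspec1, mul_pow, sq_vecNorm]
    congr 1
    rw [norm_div]
    simp [div_pow, Complex.norm_real, abs_of_pos hLpos]
  have hsum2 : ∑ j, specNorm (ΔA j) ^ 2 = vecNormSq r / L := by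
    rw [Finset.sum_congr rfl fun j _ => hspecj j, ← Finset.sum_mul, ← Finset.sum_div]
    rw [hLdef]
    rw [show (∑ j : Fin (m+1), ‖lam ^ (j : ℕ)‖ ^ 2) = lamNormSq m lam from rfl]
    rw [← hLdef]
    field_simp
  have hval2 : polyNorm2 ΔA = vecNorm r / Real.sqrt L := by
    rw [polyNorm2, hsum2, vecNorm, Real.sqrt_div (vecNormSq_nonneg r) L]
  -- generic lower bound
  have key : ∀ (ΔB : Fin (m+1) → Matrix (Fin n) (Fin n) ℂ)
      (c : Fin (m+1) → ℝ), (∀ j, 0 ≤ c j) →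
      (∀ j, vecNorm (ΔB j *ᵥ x) ≤ c j) →
      (polyEval A lam + polyEval ΔB lam) *ᵥ x = 0 →
      vecNorm r / Real.sqrt L ≤ Real.sqrt (∑ j, c j ^ 2) := by
    intro ΔB c hc hbound heq
    have hrB : polyEval ΔB lam *ᵥ x = r := by
      have := heq
      rw [Matrix.add_mulVec, hPAx] at this
      linear_combination (norm := module) this
    have hsplit : polyEval ΔB lam *ᵥ x = ∑ j : Fin (m+1), lam ^ (j : ℕ) • (ΔB j *ᵥ x) := by
      funext i
      show ∑ k, (∑ j : Fin (m+1), lam ^ (j : ℕ) • ΔB j) i k * x k = _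
      simp only [Matrix.sum_apply, Matrix.smul_apply, smul_eq_mul, Finset.sum_mul,
        Finset.sum_apply, Pi.smul_apply]
      rw [Finset.sum_comm]
      refine Finset.sum_congr rfl fun j _ => ?_
      show _ = lam ^ (j : ℕ) * ∑ k, ΔB j i k * x k
      rw [Finset.mul_sum]
      exact Finset.sum_congr rfl fun k _ => by ring
    have h1 : vecNorm r ≤ ∑ j : Fin (m+1), ‖lam ^ (j : ℕ)‖ * vecNorm (ΔB j *ᵥ x) := by
      rw [← hrB, hsplit, ← norm_e, map_sum]
      refine (norm_sum_le _ _).trans ?_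
      refine Finset.sum_le_sum fun j _ => ?_
      rw [_root_.map_smul, norm_smul, norm_e]
    have h2 : vecNorm r ≤ ∑ j : Fin (m+1), ‖lam ^ (j : ℕ)‖ * c j := by
      refine h1.trans (Finset.sum_le_sum fun j _ => ?_)
      exact mul_le_mul_of_nonneg_left (hbound j) (norm_nonneg _)
    have h3 : (∑ j : Fin (m+1), ‖lam ^ (j : ℕ)‖ * c j) ^ 2 ≤ L * ∑ j, c j ^ 2 := by
      rw [hLdef, lamNormSq]
      exact Finset.sum_mul_sq_le_sq_mul_sq _ _ _
    have h4 : vecNorm r ≤ Real.sqrt (L * ∑ j, c j ^ 2) := by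
      have hnn : 0 ≤ ∑ j : Fin (m+1), ‖lam ^ (j : ℕ)‖ * c j :=
        Finset.sum_nonneg fun j _ => mul_nonneg (norm_nonneg _) (hc j)
      refine le_trans h2 ?_
      rw [← Real.sqrt_sq hnn]
      exact Real.sqrt_le_sqrt h3
    rw [div_le_iff₀ hsL]
    calc vecNorm r ≤ Real.sqrt (L * ∑ j, c j ^ 2) := h4
      _ = Real.sqrt (∑ j, c j ^ 2) * Real.sqrt L := by
          rw [Real.sqrt_mul (le_of_lt hLpos), mul_comm]
  -- eta for Frobenius norm
  have hetaF : eta polyNormF Set.univ lam x A = vecNorm r / Real.sqrt L := by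
    rw [eta]
    have hmem : vecNorm r / Real.sqrt L ∈
        {t | ∃ ΔB ∈ (Set.univ : Set (Fin (m+1) → Matrix (Fin n) (Fin n) ℂ)),
          (polyEval A lam + polyEval ΔB lam) *ᵥ x = 0 ∧ t = polyNormF ΔB} :=
      ⟨ΔA, Set.mem_univ _, hattain, hvalF.symm⟩
    have hlb : ∀ t ∈ {t | ∃ ΔB ∈ (Set.univ : Set (Fin (m+1) → Matrix (Fin n) (Fin n) ℂ)),
        (polyEval A lam + polyEval ΔB lam) *ᵥ x = 0 ∧ t = polyNormF ΔB},
        vecNorm r / Real.sqrt L ≤ t := by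
      rintro t ⟨ΔB, -, heq, rfl⟩
      have := key ΔB (fun j => Real.sqrt (frobNormSq (ΔB j)))
        (fun j => Real.sqrt_nonneg _)
        (fun j => by
          have := vecNorm_mulVec_le_frob (ΔB j) x
          rwa [hxnorm, mul_one] at this) heq
      refine this.trans_eq ?_
      rw [polyNormF]
      congr 1
      exact Finset.sum_congr rfl fun j _ => Real.sq_sqrt (frobNormSq_nonneg _)
    exact le_antisymm (csInf_le ⟨_, hlb⟩ hmem) (le_csInf ⟨_, hmem⟩ hlb)
  -- eta for spectral norm
  have heta2 : eta polyNorm2 Set.univ lam x A = vecNorm r / Real.sqrt L := by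
    rw [eta]
    have hmem : vecNorm r / Real.sqrt L ∈
        {t | ∃ ΔB ∈ (Set.univ : Set (Fin (m+1) → Matrix (Fin n) (Fin n) ℂ)),
          (polyEval A lam + polyEval ΔB lam) *ᵥ x = 0 ∧ t = polyNorm2 ΔB} :=
      ⟨ΔA, Set.mem_univ _, hattain, hval2.symm⟩
    have hlb : ∀ t ∈ {t | ∃ ΔB ∈ (Set.univ : Set (Fin (m+1) → Matrix (Fin n) (Fin n) ℂ)),
        (polyEval A lam + polyEval ΔB lam) *ᵥ x = 0 ∧ t = polyNorm2 ΔB},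
        vecNorm r / Real.sqrt L ≤ t := by
      rintro t ⟨ΔB, -, heq, rfl⟩
      have := key ΔB (fun j => specNorm (ΔB j))
        (fun j => specNorm_nonneg _)
        (fun j => by
          have := vecNorm_mulVec_le_spec (ΔB j) x
          rwa [hxnorm, mul_one] at this) heq
      exact this
    exact le_antisymm (csInf_le ⟨_, hlb⟩ hmem) (le_csInf ⟨_, hmem⟩ hlb)
  exact ⟨hetaF, heta2, hattain, hvalF, hval2⟩
end
end

section
/- Let S be the set of symmetric matrix polynomials in P_m(ℂ^{n×n}) and let P ∈ S be regular. Let λ ∈ ℂ and x ∈ ℂⁿ with x^H x = 1, and set r := −P(λ)x, Λ_m := (1, λ, …, λ^m)ᵀ, and P_x := I − x x^H. Then for the spectral norm, η_2^S(λ, x, P) = η(λ, x, P) = ‖r‖₂/‖Λ_m‖₂. Moreover, if |xᵀr| < ‖r‖₂, then with ΔA_j := (conj(λ^j)/‖Λ_m‖₂²)·(x̄ rᵀ + r x^H − (rᵀx) x̄ x^H) − conj(λ^j)·conj(xᵀr)·P_xᵀ r rᵀ P_x / (‖Λ_m‖₂²·(‖r‖₂² − |xᵀr|²)), the polynomial ΔP(z)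 := Σ_{j=0}^m z^j ΔA_j is symmetric, satisfies P(λ)x + ΔP(λ)x = 0, and |||ΔP|||₂ = η_2^S(λ, x, P). -/
open scoped ComplexConjugate
open Matrix

noncomputable section

variable {ι : Type*} [Fintype ι] [DecidableEq ι]

/-- The class of symmetric matrix polynomials. -/
def SymPoly {ι : Type*} [Fintype ι] [DecidableEq ι] {m : ℕ} :
    Set (Fin (m+1) → Matrix ι ι ℂ) := {B | ∀ j, (B j)ᵀ = B j}

set_option linter.unusedSectionVars false
set_option linter.unusedVariables false
set_option synthInstance.maxHeartbeats 1000000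
set_option maxHeartbeats 1600000

lemma vecNormSq_nonneg (x : ι → ℂ) : 0 ≤ vecNormSq x :=
  Finset.sum_nonneg fun _ _ => by positivity

lemma vecNorm_eq (x : ι → ℂ) : vecNorm x = ‖(WithLp.equiv 2 (ι → ℂ)).symm x‖ := by
  rw [EuclideanSpace.norm_eq, vecNorm, vecNormSq]
  simp [PiLp.toLp_apply]

lemma vecNorm_nonneg (x : ι → ℂ) : 0 ≤ vecNorm x := Real.sqrt_nonneg _

lemma vecNorm_sq (x : ι → ℂ) : vecNorm x ^ 2 = vecNormSq x :=
  Real.sq_sqrt (vecNormSq_nonneg x)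

lemma dot_self_eq (y : ι → ℂ) : star y ⬝ᵥ y = (vecNormSq y : ℂ) := by
  simp only [dotProduct, vecNormSq, Pi.star_apply]
  push_cast
  refine Finset.sum_congr rfl fun i _ => ?_
  rw [Complex.star_def, Complex.conj_mul']

lemma specNorm_nonneg (M : Matrix ι ι ℂ) : 0 ≤ specNorm M := norm_nonneg _

lemma mulVec_norm_le (M : Matrix ι ι ℂ) (w : ι → ℂ) :
    vecNorm (M *ᵥ w) ≤ specNorm M * vecNorm w := by
  rw [vecNorm_eq, vecNorm_eq]
  have := (Matrix.toEuclideanCLM (𝕜 := ℂ) M).le_opNorm ((WithLp.equiv 2 (ι → ℂ)).symm w)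
  rwa [WithLp.equiv_symm_apply, Matrix.toEuclideanCLM_toLp] at this

lemma specNorm_le_of_forall {M : Matrix ι ι ℂ} {c : ℝ} (hc : 0 ≤ c)
    (h : ∀ w, vecNorm (M *ᵥ w) ≤ c * vecNorm w) : specNorm M ≤ c := by
  refine ContinuousLinearMap.opNorm_le_bound _ hc fun v => ?_
  have h2 := h (WithLp.equiv 2 (ι → ℂ) v)
  rw [vecNorm_eq, vecNorm_eq] at h2
  simp at h2; exact h2

lemma vecMulVec_mulVec' (a b w : ι → ℂ) : vecMulVec a b *ᵥ w = (b ⬝ᵥ w) • a := by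
  ext i
  simp [mulVec, vecMulVec_apply, dotProduct, Finset.mul_sum, mul_comm, mul_left_comm, mul_assoc]

lemma mul_vecMulVec (M : Matrix ι ι ℂ) (a b : ι → ℂ) :
    M * vecMulVec a b = vecMulVec (M *ᵥ a) b := by
  ext i j
  simp [mul_apply, vecMulVec_apply, mulVec, dotProduct, Finset.sum_mul, mul_assoc]

lemma vecMulVec_mul (M : Matrix ι ι ℂ) (a b : ι → ℂ) :
    vecMulVec a b * M = vecMulVec a (b ᵥ* M) := by
  ext i j
  simp [mul_apply, vecMulVec_apply, vecMul, dotProduct, Finset.mul_sum, mul_assoc]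

lemma vecMul_vecMulVec (a b c : ι → ℂ) : a ᵥ* vecMulVec b c = (a ⬝ᵥ b) • c := by
  ext j
  simp only [vecMul, vecMulVec_apply, dotProduct, Pi.smul_apply, smul_eq_mul, Finset.sum_mul]
  exact Finset.sum_congr rfl fun i _ => by ring

lemma vecNormSq_smul (c : ℂ) (y : ι → ℂ) : vecNormSq (c • y) = ‖c‖ ^ 2 * vecNormSq y := by
  simp [vecNormSq, norm_smul, mul_pow, Finset.mul_sum]

lemma vecNorm_smul (c : ℂ) (y : ι → ℂ) : vecNorm (c • y) = ‖c‖ * vecNorm y := by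
  rw [vecNorm, vecNorm, vecNormSq_smul, Real.sqrt_mul (by positivity), Real.sqrt_sq (norm_nonneg _)]

lemma star_dot_conj (a b : ι → ℂ) : star a ⬝ᵥ b = conj (star b ⬝ᵥ a) := by
  simp only [dotProduct, map_sum, Pi.star_apply, _root_.map_mul, Complex.conj_conj, RingHom.coe_coe]
  exact Finset.sum_congr rfl fun i _ => by simp [Complex.star_def, mul_comm]

lemma vecNormSq_star (y : ι → ℂ) : vecNormSq (star y) = vecNormSq y := by
  simp [vecNormSq]

lemma vecNormSq_eq_zero {y : ι → ℂ} (h : vecNormSq y = 0) : y = 0 := by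
  have := (Finset.sum_eq_zero_iff_of_nonneg (fun i _ => by positivity)).mp h
  ext i
  have := this i (Finset.mem_univ i)
  simpa using this

lemma pythag {a b : ι → ℂ} (h : star a ⬝ᵥ b = 0) :
    vecNormSq (a + b) = vecNormSq a + vecNormSq b := by
  have h' : star b ⬝ᵥ a = 0 := by
    rw [star_dot_conj] at h
    simpa using congrArg conj h
  have e1 : star (a + b) ⬝ᵥ (a + b) = star a ⬝ᵥ a + star b ⬝ᵥ b := by
    rw [star_add, add_dotProduct, dotProduct_add, dotProduct_add, h, h']
    ring
  rw [dot_self_eq, dot_self_eq, dot_self_eq] at e1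
  exact_mod_cast e1

lemma dot_smul' (c : ℂ) (a b : ι → ℂ) : a ⬝ᵥ (c • b) = c * (a ⬝ᵥ b) := by
  simp [dotProduct, Finset.mul_sum, mul_comm, mul_left_comm]

lemma bessel2 {u v : ι → ℂ} (hu : vecNormSq u = 1) (hv : vecNormSq v = 1)
    (huv : star u ⬝ᵥ v = 0) (w : ι → ℂ) :
    ‖star u ⬝ᵥ w‖ ^ 2 + ‖star v ⬝ᵥ w‖ ^ 2 ≤ vecNormSq w := by
  set c := star u ⬝ᵥ w with hc
  set d := star v ⬝ᵥ w with hd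
  have hvu : star v ⬝ᵥ u = 0 := by
    rw [star_dot_conj] at huv
    simpa using congrArg conj huv
  set w' := w - c • u - d • v with hw'
  have hud : star u ⬝ᵥ (c • u + d • v) = c := by
    rw [dotProduct_add, dot_smul', dot_smul', dot_self_eq, hu, huv]
    simp
  have hvd : star v ⬝ᵥ (c • u + d • v) = d := by
    rw [dotProduct_add, dot_smul', dot_smul', dot_self_eq, hv, hvu]
    simp
  have hw'u : star u ⬝ᵥ w' = 0 := by
    have : w' = w - (c • u + d • v) := by rw [hw']; abel
    rw [this, dotProduct_sub, hud, ← hc, sub_self]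
  have hw'v : star v ⬝ᵥ w' = 0 := by
    have : w' = w - (c • u + d • v) := by rw [hw']; abel
    rw [this, dotProduct_sub, hvd, ← hd, sub_self]
  have horth : star w' ⬝ᵥ (c • u + d • v) = 0 := by
    rw [dotProduct_add, dot_smul', dot_smul']
    rw [star_dot_conj w' u, star_dot_conj w' v, hw'u, hw'v]
    simp
  have hcu : star (c • u) ⬝ᵥ (d • v) = 0 := by
    rw [star_smul, smul_dotProduct, dot_smul', huv]
    simp
  have hsplit : vecNormSq w = vecNormSq w' + (‖c‖ ^ 2 + ‖d‖ ^ 2) := by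
    have hw : w = w' + (c • u + d • v) := by rw [hw']; abel
    rw [hw, pythag horth, pythag hcu, vecNormSq_smul, vecNormSq_smul, hu, hv]
    ring
  rw [hsplit]
  have := vecNormSq_nonneg w'
  linarith

lemma dot_cs (b w : ι → ℂ) : ‖star b ⬝ᵥ w‖ ≤ vecNorm b * vecNorm w := by
  have h : star b ⬝ᵥ w =
      inner ℂ ((WithLp.equiv 2 (ι → ℂ)).symm b) ((WithLp.equiv 2 (ι → ℂ)).symm w) := by
    rw [WithLp.equiv_symm_apply, EuclideanSpace.inner_toLp_toLp, dotProduct_comm]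
  rw [h, vecNorm_eq, vecNorm_eq]
  exact norm_inner_le_norm _ _

lemma specNorm_smul (c : ℂ) (M : Matrix ι ι ℂ) : specNorm (c • M) = ‖c‖ * specNorm M := by
  have h : Matrix.toEuclideanCLM (𝕜 := ℂ) (c • M) = c • Matrix.toEuclideanCLM (𝕜 := ℂ) M :=
    map_smul (Matrix.toEuclideanCLM (𝕜 := ℂ)) c M
  rw [specNorm, specNorm, h]
  exact norm_smul c (Matrix.toEuclideanCLM (𝕜 := ℂ) M)

lemma vecNorm_star (y : ι → ℂ) : vecNorm (star y) = vecNorm y := by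
  rw [vecNorm, vecNorm, vecNormSq_star]

@[simp] lemma vecNorm_zero : vecNorm (0 : ι → ℂ) = 0 := by
  simp [vecNorm, vecNormSq]

lemma specNorm_rankOne (a b : ι → ℂ) :
    specNorm (vecMulVec a (star b)) = vecNorm a * vecNorm b := by
  rcases eq_or_ne b 0 with rfl | hb
  · simp only [star_zero, vecNorm_zero, mul_zero]
    have : vecMulVec a (0 : ι → ℂ) = 0 := by ext i j; simp [vecMulVec_apply]
    rw [this, specNorm, map_zero, norm_zero]
  · have hbn : vecNormSq b ≠ 0 := fun h => hb (vecNormSq_eq_zero h)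
    have hbpos : 0 < vecNormSq b := lt_of_le_of_ne (vecNormSq_nonneg b) (Ne.symm hbn)
    have hnbpos : 0 < vecNorm b := Real.sqrt_pos.mpr hbpos
    apply le_antisymm
    · refine specNorm_le_of_forall (mul_nonneg (vecNorm_nonneg a) (vecNorm_nonneg b)) fun w => ?_
      rw [vecMulVec_mulVec', vecNorm_smul]
      calc ‖star b ⬝ᵥ w‖ * vecNorm a ≤ (vecNorm b * vecNorm w) * vecNorm a :=
            mul_le_mul_of_nonneg_right (dot_cs b w) (vecNorm_nonneg a)
        _ = vecNorm a * vecNorm b * vecNorm w := by ring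
    · have h1 := mulVec_norm_le (vecMulVec a (star b)) b
      rw [vecMulVec_mulVec', dot_self_eq, vecNorm_smul] at h1
      rw [Complex.norm_real, Real.norm_of_nonneg (vecNormSq_nonneg b), ← vecNorm_sq] at h1
      have h2 : vecNorm b ^ 2 * vecNorm a = (vecNorm b * vecNorm a) * vecNorm b := by ring
      rw [h2] at h1
      have := (mul_le_mul_iff_of_pos_right hnbpos).mp h1
      linarith

lemma vecNorm_sum_le {κ : Type*} (s : Finset κ) (f : κ → ι → ℂ) :
    vecNorm (∑ j ∈ s, f j) ≤ ∑ j ∈ s, vecNorm (f j) := by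
  have he : ((WithLp.equiv 2 (ι → ℂ)).symm (∑ j ∈ s, f j)) =
      ∑ j ∈ s, (WithLp.equiv 2 (ι → ℂ)).symm (f j) := WithLp.toLp_sum _ _ s f
  rw [vecNorm_eq, he]
  refine (norm_sum_le _ _).trans ?_
  exact le_of_eq (Finset.sum_congr rfl fun j _ => (vecNorm_eq (f j)).symm)

lemma star_dot_star (a b : ι → ℂ) : star a ⬝ᵥ star b = conj (a ⬝ᵥ b) := by
  simp only [dotProduct, map_sum, Pi.star_apply, _root_.map_mul]
  exact Finset.sum_congr rfl fun i _ => by simp [Complex.star_def]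

lemma vecMulVec_transpose' (a b : ι → ℂ) : (vecMulVec a b)ᵀ = vecMulVec b a := by
  ext i j
  simp [vecMulVec_apply, mul_comm]

lemma G_props (x r s : ι → ℂ) (α : ℂ) (G : Matrix ι ι ℂ)
    (hx : star x ⬝ᵥ x = 1)
    (hα : α = x ⬝ᵥ r) (hs : s = r - α • star x)
    (hG : G = vecMulVec (star x) r + vecMulVec r (star x) - α • vecMulVec (star x) (star x)
      - (conj α / ((vecNormSq s : ℝ) : ℂ)) • vecMulVec s s)
    (hlt : ‖α‖ < vecNorm r) :
    Gᵀ = G ∧ G *ᵥ x = r ∧ specNorm G = vecNorm r := by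
  have hx1 : vecNormSq x = 1 := by
    have h := dot_self_eq x
    rw [hx] at h
    exact_mod_cast h.symm
  have hxsx : x ⬝ᵥ star x = 1 := by rw [dotProduct_comm]; exact hx
  have hxs : x ⬝ᵥ s = 0 := by
    rw [hs, dotProduct_sub, dot_smul', hxsx, hα]
    ring
  have hsx : s ⬝ᵥ x = 0 := by rw [dotProduct_comm]; exact hxs
  have hr' : r = α • star x + s := by rw [hs]; abel
  have horth0 : star (α • star x) ⬝ᵥ s = 0 := by
    rw [star_smul, smul_dotProduct, star_star]
    simp [hxs]
  have hrn2 : vecNormSq r = ‖α‖ ^ 2 + vecNormSq s := by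
    conv_lhs => rw [hr']
    rw [pythag horth0, vecNormSq_smul, vecNormSq_star, hx1, mul_one]
  set S := vecNormSq s with hSdef
  have hSnn : 0 ≤ S := vecNormSq_nonneg s
  have hrpos : 0 < vecNorm r := lt_of_le_of_lt (norm_nonneg α) hlt
  have hrsq : vecNorm r ^ 2 = vecNormSq r := vecNorm_sq r
  have hSpos : 0 < S := by nlinarith [norm_nonneg α]
  have hSne : S ≠ 0 := ne_of_gt hSpos
  have hSCne : ((S : ℝ) : ℂ) ≠ 0 := by exact_mod_cast hSne
  -- action of G
  have haction : ∀ w, G *ᵥ w = (α * (star x ⬝ᵥ w) + s ⬝ᵥ w) • star x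
      + ((star x ⬝ᵥ w) - conj α / ((S : ℝ) : ℂ) * (s ⬝ᵥ w)) • s := by
    intro w
    rw [hG, sub_mulVec, sub_mulVec, add_mulVec, smul_mulVec, smul_mulVec,
      vecMulVec_mulVec', vecMulVec_mulVec', vecMulVec_mulVec', vecMulVec_mulVec']
    have hrw : r ⬝ᵥ w = α * (star x ⬝ᵥ w) + s ⬝ᵥ w := by
      conv_lhs => rw [hr']
      rw [add_dotProduct, smul_dotProduct]
      simp [smul_eq_mul]
    rw [hrw]
    conv_lhs => rw [hr']
    ext i
    simp only [Pi.add_apply, Pi.sub_apply, Pi.smul_apply, smul_eq_mul, Pi.star_apply]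
    ring
  have hGx : G *ᵥ x = r := by
    rw [haction x, hx, hsx]
    conv_rhs => rw [hr']
    simp
  refine ⟨?_, hGx, ?_⟩
  · rw [hG]
    rw [transpose_sub, transpose_sub, transpose_add, transpose_smul, transpose_smul,
      vecMulVec_transpose', vecMulVec_transpose', vecMulVec_transpose', vecMulVec_transpose']
    ring_nf
    abel
  -- norm computation
  have czz : ∀ z : ℂ, ((‖z‖ : ℝ) : ℂ) ^ 2 = conj z * z := fun z =>
    (Complex.conj_mul' z).symm
  have key : ∀ c t : ℂ, ‖α * c + t‖ ^ 2 * 1 + ‖c - conj α / ((S : ℝ) : ℂ) * t‖ ^ 2 * S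
      = vecNormSq r * (‖c‖ ^ 2 + ‖t‖ ^ 2 / S) := by
    intro c t
    rw [← Complex.ofReal_inj]
    push_cast
    rw [czz, czz, czz, czz]
    have hr2 : ((vecNormSq r : ℝ) : ℂ) = conj α * α + ((S : ℝ) : ℂ) := by
      rw [hrn2]
      push_cast
      rw [czz α]
    rw [hr2]
    simp only [map_sub, map_add, _root_.map_mul, map_div₀, Complex.conj_conj,
      Complex.conj_ofReal]
    field_simp
    ring
  have hnormsq : ∀ w, vecNormSq (G *ᵥ w)
      = vecNormSq r * (‖star x ⬝ᵥ w‖ ^ 2 + ‖s ⬝ᵥ w‖ ^ 2 / S) := by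
    intro w
    rw [haction w, pythag ?_, vecNormSq_smul, vecNormSq_smul, vecNormSq_star, hx1, ← hSdef]
    · exact key _ _
    · rw [star_smul, smul_dotProduct, dot_smul']
      simp [hxs]
  have hbess : ∀ w, ‖star x ⬝ᵥ w‖ ^ 2 + ‖s ⬝ᵥ w‖ ^ 2 / S ≤ vecNormSq w := by
    intro w
    have hsq : Real.sqrt S > 0 := Real.sqrt_pos.mpr hSpos
    set v : ι → ℂ := ((Real.sqrt S : ℂ))⁻¹ • star s with hv
    have hv1 : vecNormSq v = 1 := by
      rw [hv, vecNormSq_smul, vecNormSq_star, ← hSdef]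
      rw [norm_inv, Complex.norm_real, Real.norm_of_nonneg hsq.le]
      rw [inv_pow, Real.sq_sqrt hSnn]
      field_simp
    have hxv : star x ⬝ᵥ v = 0 := by
      rw [hv, dot_smul', star_dot_star]
      simp [hxs]
    have hvw : ‖star v ⬝ᵥ w‖ ^ 2 = ‖s ⬝ᵥ w‖ ^ 2 / S := by
      rw [hv, star_smul, smul_dotProduct, star_star]
      have : star ((Real.sqrt S : ℂ)⁻¹) = ((Real.sqrt S : ℂ))⁻¹ := by
        simp [Complex.star_def, Complex.conj_ofReal]
      rw [this]
      simp only [smul_eq_mul, norm_mul, mul_pow, norm_inv, Complex.norm_real,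
        Real.norm_of_nonneg hsq.le]
      rw [inv_pow, Real.sq_sqrt hSnn]
      ring
    have := bessel2 hx1 hv1 hxv w
    rw [hvw] at this
    exact this
  have hrSqnn : 0 ≤ vecNormSq r := vecNormSq_nonneg r
  have hvx1 : vecNorm x = 1 := by rw [vecNorm, hx1, Real.sqrt_one]
  apply le_antisymm
  · refine specNorm_le_of_forall hrpos.le fun w => ?_
    have h1 : vecNormSq (G *ᵥ w) ≤ vecNormSq r * vecNormSq w := by
      rw [hnormsq w]
      exact mul_le_mul_of_nonneg_left (hbess w) hrSqnn
    have h2 : vecNorm (G *ᵥ w) ≤ Real.sqrt (vecNormSq r * vecNormSq w) := by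
      rw [vecNorm]
      exact Real.sqrt_le_sqrt h1
    have h3 : Real.sqrt (vecNormSq r * vecNormSq w) = vecNorm r * vecNorm w := by
      rw [vecNorm, vecNorm, ← Real.sqrt_mul hrSqnn]
    rwa [h3] at h2
  · have h := mulVec_norm_le G x
    rwa [hGx, hvx1, mul_one] at h

lemma lamNormSq_def (m : ℕ) (z : ℂ) : lamNormSq m z = ∑ j : Fin (m+1), ‖z ^ (j : ℕ)‖ ^ 2 := rfl

lemma lamNormSq_one_le (m : ℕ) (z : ℂ) : 1 ≤ lamNormSq m z := by
  rw [lamNormSq_def]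
  have h0 : ‖z ^ (((0 : Fin (m+1)) : ℕ))‖ ^ 2 = 1 := by norm_num
  calc (1:ℝ) = ‖z ^ (((0 : Fin (m+1)) : ℕ))‖ ^ 2 := h0.symm
    _ ≤ ∑ j : Fin (m+1), ‖z ^ (j : ℕ)‖ ^ 2 :=
      Finset.single_le_sum (f := fun j : Fin (m+1) => ‖z ^ (j : ℕ)‖ ^ 2)
        (fun j _ => by positivity) (Finset.mem_univ (0 : Fin (m+1)))

lemma lam_sum (m : ℕ) (z : ℂ) :
    ∑ j : Fin (m+1), z ^ (j : ℕ) * conj (z ^ (j : ℕ)) = ((lamNormSq m z : ℝ) : ℂ) := by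
  rw [lamNormSq_def]
  push_cast
  refine Finset.sum_congr rfl fun j _ => ?_
  rw [Complex.mul_conj']

lemma s_normSq (x r : ι → ℂ) (hx : star x ⬝ᵥ x = 1) :
    vecNormSq (r - (x ⬝ᵥ r) • star x) = vecNormSq r - ‖x ⬝ᵥ r‖ ^ 2 := by
  have hx1 : vecNormSq x = 1 := by
    have h := dot_self_eq x
    rw [hx] at h
    exact_mod_cast h.symm
  set α := x ⬝ᵥ r with hα
  set s := r - α • star x with hs
  have hxsx : x ⬝ᵥ star x = 1 := by rw [dotProduct_comm]; exact hx
  have hxs : x ⬝ᵥ s = 0 := by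
    rw [hs, dotProduct_sub, dot_smul', hxsx, hα]
    ring
  have horth0 : star (α • star x) ⬝ᵥ s = 0 := by
    rw [star_smul, smul_dotProduct, star_star]
    simp [hxs]
  have hr' : r = α • star x + s := by rw [hs]; abel
  have : vecNormSq r = ‖α‖ ^ 2 + vecNormSq s := by
    conv_lhs => rw [hr']
    rw [pythag horth0, vecNormSq_smul, vecNormSq_star, hx1, mul_one]
  rw [this]
  ring

lemma polyEval_mulVec {m : ℕ} (A : Fin (m+1) → Matrix ι ι ℂ) (z : ℂ) (w : ι → ℂ) :
    polyEval A z *ᵥ w = ∑ j : Fin (m+1), z ^ (j : ℕ) • (A j *ᵥ w) := by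
  rw [polyEval]
  ext i
  simp only [mulVec, dotProduct, Finset.sum_apply, Pi.smul_apply, smul_eq_mul,
    Matrix.sum_apply, Matrix.smul_apply, Finset.sum_mul]
  rw [Finset.sum_comm]
  refine Finset.sum_congr rfl fun j _ => ?_
  rw [Finset.mul_sum]
  exact Finset.sum_congr rfl fun k _ => by ring

lemma eta_lower {m : ℕ} (lam : ℂ) (x : ι → ℂ) (hx : star x ⬝ᵥ x = 1)
    (r : ι → ℂ) (ΔB : Fin (m+1) → Matrix ι ι ℂ)
    (hB : polyEval ΔB lam *ᵥ x = r) :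
    vecNorm r / Real.sqrt (lamNormSq m lam) ≤ polyNorm2 ΔB := by
  have hx1 : vecNormSq x = 1 := by
    have h := dot_self_eq x
    rw [hx] at h
    exact_mod_cast h.symm
  have hvx1 : vecNorm x = 1 := by rw [vecNorm, hx1, Real.sqrt_one]
  have hL1 := lamNormSq_one_le m lam
  have hsL : 0 < Real.sqrt (lamNormSq m lam) := Real.sqrt_pos.mpr (by linarith)
  rw [div_le_iff₀ hsL]
  calc vecNorm r = vecNorm (∑ j : Fin (m+1), lam ^ (j : ℕ) • (ΔB j *ᵥ x)) := by
        rw [← polyEval_mulVec, hB]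
    _ ≤ ∑ j : Fin (m+1), vecNorm (lam ^ (j : ℕ) • (ΔB j *ᵥ x)) := vecNorm_sum_le _ _
    _ = ∑ j : Fin (m+1), ‖lam ^ (j : ℕ)‖ * vecNorm (ΔB j *ᵥ x) := by
        exact Finset.sum_congr rfl fun j _ => vecNorm_smul _ _
    _ ≤ ∑ j : Fin (m+1), ‖lam ^ (j : ℕ)‖ * specNorm (ΔB j) := by
        refine Finset.sum_le_sum fun j _ => ?_
        refine mul_le_mul_of_nonneg_left ?_ (norm_nonneg _)
        have := mulVec_norm_le (ΔB j) x
        rwa [hvx1, mul_one] at this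
    _ ≤ Real.sqrt (∑ j : Fin (m+1), ‖lam ^ (j : ℕ)‖ ^ 2)
          * Real.sqrt (∑ j : Fin (m+1), specNorm (ΔB j) ^ 2) :=
        Real.sum_mul_le_sqrt_mul_sqrt _ _ _
    _ = polyNorm2 ΔB * Real.sqrt (lamNormSq m lam) := by
        rw [polyNorm2, ← lamNormSq_def]
        ring

lemma polyEval_scaled {m : ℕ} (M : Matrix ι ι ℂ) (lam : ℂ) (β : ℂ)
    (W : Fin (m+1) → Matrix ι ι ℂ)
    (hW : ∀ j, W j = (conj (lam ^ (j : ℕ)) * β / ((lamNormSq m lam : ℝ) : ℂ)) • M) :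
    polyEval W lam = β • M := by
  have hL1 := lamNormSq_one_le m lam
  have hLC : ((lamNormSq m lam : ℝ) : ℂ) ≠ 0 := by
    simp only [ne_eq, Complex.ofReal_eq_zero]
    linarith
  rw [polyEval]
  calc ∑ j : Fin (m+1), lam ^ (j : ℕ) • W j
      = ∑ j : Fin (m+1), (lam ^ (j : ℕ) * (conj (lam ^ (j : ℕ)) * β
          / ((lamNormSq m lam : ℝ) : ℂ))) • M := by
        exact Finset.sum_congr rfl fun j _ => by rw [hW j, smul_smul]
    _ = (∑ j : Fin (m+1), lam ^ (j : ℕ) * (conj (lam ^ (j : ℕ)) * β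
          / ((lamNormSq m lam : ℝ) : ℂ))) • M := by rw [Finset.sum_smul]
    _ = β • M := by
        congr 1
        have : ∑ j : Fin (m+1), lam ^ (j : ℕ) * (conj (lam ^ (j : ℕ)) * β
            / ((lamNormSq m lam : ℝ) : ℂ))
            = (∑ j : Fin (m+1), lam ^ (j : ℕ) * conj (lam ^ (j : ℕ))) * β
              / ((lamNormSq m lam : ℝ) : ℂ) := by
          rw [Finset.sum_mul, Finset.sum_div]
          exact Finset.sum_congr rfl fun j _ => by ring
        rw [this, lam_sum]
        field_simp

lemma polyNorm2_scaled {m : ℕ} (M : Matrix ι ι ℂ) (lam : ℂ) (β : ℂ)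
    (W : Fin (m+1) → Matrix ι ι ℂ)
    (hW : ∀ j, W j = (conj (lam ^ (j : ℕ)) * β / ((lamNormSq m lam : ℝ) : ℂ)) • M) :
    polyNorm2 W = ‖β‖ * specNorm M / Real.sqrt (lamNormSq m lam) := by
  have hL1 := lamNormSq_one_le m lam
  have hLpos : (0:ℝ) < lamNormSq m lam := by linarith
  have hspec : ∀ j : Fin (m+1), specNorm (W j)
      = ‖lam ^ (j : ℕ)‖ * (‖β‖ * specNorm M / lamNormSq m lam) := by
    intro j
    rw [hW j, specNorm_smul, norm_div, norm_mul, RCLike.norm_conj, Complex.norm_real,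
      Real.norm_of_nonneg hLpos.le]
    ring
  rw [polyNorm2]
  have : ∑ j : Fin (m+1), specNorm (W j) ^ 2
      = (∑ j : Fin (m+1), ‖lam ^ (j : ℕ)‖ ^ 2) * (‖β‖ * specNorm M / lamNormSq m lam) ^ 2 := by
    rw [Finset.sum_mul]
    exact Finset.sum_congr rfl fun j _ => by rw [hspec j]; ring
  rw [this, ← lamNormSq_def, Real.sqrt_mul hLpos.le,
    Real.sqrt_sq (div_nonneg (mul_nonneg (norm_nonneg _) (specNorm_nonneg _)) hLpos.le)]
  have hsne : Real.sqrt (lamNormSq m lam) ≠ 0 := ne_of_gt (Real.sqrt_pos.mpr hLpos)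
  rw [eq_div_iff hsne, mul_right_comm, Real.mul_self_sqrt hLpos.le]
  field_simp

/-- Structured backward error of an approximate eigenpair of a symmetric
matrix polynomial, spectral norm: it equals the unstructured backward error
`‖r‖₂/‖Λ_m‖₂`, and (when `|xᵀr| < ‖r‖₂`) the explicitly given symmetric perturbation
attains it. -/
theorem symmetric_backward_error_spectral {n m : ℕ}
    (A : Fin (m+1) → Matrix (Fin n) (Fin n) ℂ)
    (hA : A ∈ SymPoly) (hreg : Regular A)
    (lam : ℂ) (x : Fin n → ℂ) (hx : star x ⬝ᵥ x = 1)
    (r : Fin n → ℂ) (hr : r = -(polyEval A lam *ᵥ x))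
    (Px : Matrix (Fin n) (Fin n) ℂ) (hPx : Px = 1 - vecMulVec x (star x))
    (ΔA : Fin (m+1) → Matrix (Fin n) (Fin n) ℂ)
    (hΔ : ∀ j : Fin (m+1),
      ΔA j = (conj (lam ^ (j : ℕ)) / (lamNormSq m lam : ℂ)) •
          (vecMulVec (star x) r + vecMulVec r (star x)
            - (r ⬝ᵥ x) • vecMulVec (star x) (star x))
        - (conj (lam ^ (j : ℕ)) * conj (x ⬝ᵥ r) /
            ((lamNormSq m lam : ℂ) * ((vecNormSq r - ‖x ⬝ᵥ r‖ ^ 2 : ℝ) : ℂ))) •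
          (Pxᵀ * vecMulVec r r * Px)) :
    eta polyNorm2 SymPoly lam x A = eta polyNorm2 Set.univ lam x A ∧
    eta polyNorm2 Set.univ lam x A = vecNorm r / Real.sqrt (lamNormSq m lam) ∧
    (‖x ⬝ᵥ r‖ < vecNorm r →
      ΔA ∈ SymPoly ∧
      (polyEval A lam + polyEval ΔA lam) *ᵥ x = 0 ∧
      polyNorm2 ΔA = eta polyNorm2 SymPoly lam x A) := by
  
  have hL1 := lamNormSq_one_le m lam
  have hLpos : (0:ℝ) < lamNormSq m lam := by linarith
  have hx1 : vecNormSq x = 1 := by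
    have h := dot_self_eq x
    rw [hx] at h
    exact_mod_cast h.symm
  have hvx1 : vecNorm x = 1 := by rw [vecNorm, hx1, Real.sqrt_one]
  set v := vecNorm r / Real.sqrt (lamNormSq m lam) with hv
  have hPAx : polyEval A lam *ᵥ x = -r := by rw [hr]; simp
  -- key claim: under strict inequality, ΔA is an optimal symmetric perturbation
  have hkey : ‖x ⬝ᵥ r‖ < vecNorm r →
      ΔA ∈ SymPoly ∧ (polyEval A lam + polyEval ΔA lam) *ᵥ x = 0 ∧ polyNorm2 ΔA = v := by
    intro hlt
    set α := x ⬝ᵥ r with hα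
    set s := r - α • star x with hs
    have hSs : vecNormSq s = vecNormSq r - ‖α‖ ^ 2 := by
      rw [hs, hα]
      exact s_normSq x r hx
    have hPxT : Pxᵀ = 1 - vecMulVec (star x) x := by
      rw [hPx, transpose_sub, transpose_one, vecMulVec_transpose']
    have hPxvr : Pxᵀ *ᵥ r = s := by
      rw [hPxT, sub_mulVec, one_mulVec, vecMulVec_mulVec', hs, hα]
    have hrPx : r ᵥ* Px = s := by
      rw [← Matrix.mulVec_transpose]
      exact hPxvr
    have hmid : Pxᵀ * vecMulVec r r * Px = vecMulVec s s := by
      rw [_root_.mul_vecMulVec, hPxvr, _root_.vecMulVec_mul, hrPx]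
    set G := vecMulVec (star x) r + vecMulVec r (star x) - α • vecMulVec (star x) (star x)
      - (conj α / ((vecNormSq s : ℝ) : ℂ)) • vecMulVec s s with hG
    have hΔeq : ∀ j : Fin (m+1),
        ΔA j = (conj (lam ^ (j : ℕ)) * 1 / ((lamNormSq m lam : ℝ) : ℂ)) • G := by
      intro j
      have hcomm : r ⬝ᵥ x = α := by rw [hα, dotProduct_comm]
      rw [hΔ j, hmid, ← hSs, hcomm, hG]
      match_scalars <;> field_simp
    obtain ⟨hGT, hGx, hGnorm⟩ := G_props x r s α G hx hα hs hG hlt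
    refine ⟨fun j => ?_, ?_, ?_⟩
    · rw [hΔeq j, transpose_smul, hGT]
    · rw [add_mulVec, hPAx, polyEval_scaled G lam 1 ΔA hΔeq, one_smul, hGx]
      exact neg_add_cancel r
    · rw [polyNorm2_scaled G lam 1 ΔA hΔeq, hGnorm, norm_one, one_mul, hv]
  -- existence of an optimal symmetric perturbation in general
  have hwit : ∃ W : Fin (m+1) → Matrix (Fin n) (Fin n) ℂ, W ∈ SymPoly ∧
      (polyEval A lam + polyEval W lam) *ᵥ x = 0 ∧ polyNorm2 W = v := by
    by_cases hlt : ‖x ⬝ᵥ r‖ < vecNorm r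
    · obtain ⟨h1, h2, h3⟩ := hkey hlt
      exact ⟨ΔA, h1, h2, h3⟩
    · push_neg at hlt
      set α := x ⬝ᵥ r with hα
      have hSs : vecNormSq (r - α • star x) = vecNormSq r - ‖α‖ ^ 2 := by
        rw [hα]
        exact s_normSq x r hx
      have hs0 : r - α • star x = 0 := by
        apply vecNormSq_eq_zero
        have h1 : vecNormSq r - ‖α‖ ^ 2 ≤ 0 := by
          have h2 : vecNorm r ^ 2 ≤ ‖α‖ ^ 2 := by
            nlinarith [vecNorm_nonneg r, norm_nonneg α]
          rw [vecNorm_sq] at h2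
          linarith
        have h3 := vecNormSq_nonneg (r - α • star x)
        linarith
      have hre : r = α • star x := by
        have := sub_eq_zero.mp hs0
        exact this
      have hnr : vecNorm r = ‖α‖ := by
        rw [hre, vecNorm_smul, vecNorm_star, hvx1, mul_one]
      refine ⟨fun j => (conj (lam ^ (j : ℕ)) * α / ((lamNormSq m lam : ℝ) : ℂ)) •
        vecMulVec (star x) (star x), fun j => ?_, ?_, ?_⟩
      · rw [transpose_smul, vecMulVec_transpose']
      · rw [add_mulVec, hPAx, polyEval_scaled _ lam α _ (fun j => rfl), smul_mulVec,
          vecMulVec_mulVec', hx, one_smul, ← hre]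
        exact neg_add_cancel r
      · rw [polyNorm2_scaled _ lam α _ (fun j => rfl), specNorm_rankOne (star x) x,
          vecNorm_star, hvx1, mul_one, mul_one, hv, hnr]
  -- lower bound for all admissible perturbations
  have hlow : ∀ t ∈ {t | ∃ ΔB ∈ (Set.univ : Set (Fin (m+1) → Matrix (Fin n) (Fin n) ℂ)),
      (polyEval A lam + polyEval ΔB lam) *ᵥ x = 0 ∧ t = polyNorm2 ΔB}, v ≤ t := by
    rintro t ⟨ΔB, -, hcond, rfl⟩
    have heq : polyEval ΔB lam *ᵥ x = r := by
      rw [add_mulVec, hPAx] at hcond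
      have := neg_add_eq_zero.mp hcond
      exact this.symm
    exact eta_lower lam x hx r ΔB heq
  obtain ⟨W, hW1, hW2, hW3⟩ := hwit
  have hmemS : v ∈ {t | ∃ ΔB ∈ (SymPoly : Set (Fin (m+1) → Matrix (Fin n) (Fin n) ℂ)),
      (polyEval A lam + polyEval ΔB lam) *ᵥ x = 0 ∧ t = polyNorm2 ΔB} :=
    ⟨W, hW1, hW2, hW3.symm⟩
  have hsubset : {t | ∃ ΔB ∈ (SymPoly : Set (Fin (m+1) → Matrix (Fin n) (Fin n) ℂ)),
      (polyEval A lam + polyEval ΔB lam) *ᵥ x = 0 ∧ t = polyNorm2 ΔB}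
      ⊆ {t | ∃ ΔB ∈ (Set.univ : Set (Fin (m+1) → Matrix (Fin n) (Fin n) ℂ)),
      (polyEval A lam + polyEval ΔB lam) *ᵥ x = 0 ∧ t = polyNorm2 ΔB} := by
    rintro t ⟨B, _, h1, h2⟩
    exact ⟨B, trivial, h1, h2⟩
  have hetaS : eta polyNorm2 SymPoly lam x A = v := by
    rw [eta]
    apply le_antisymm
    · exact csInf_le ⟨v, fun t ht => hlow t (hsubset ht)⟩ hmemS
    · exact le_csInf ⟨v, hmemS⟩ fun t ht => hlow t (hsubset ht)
  have hetaU : eta polyNorm2 Set.univ lam x A = v := by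
    rw [eta]
    apply le_antisymm
    · exact csInf_le ⟨v, hlow⟩ (hsubset hmemS)
    · exact le_csInf ⟨v, hsubset hmemS⟩ hlow
  refine ⟨hetaS.trans hetaU.symm, hetaU, fun hlt => ?_⟩
  obtain ⟨h1, h2, h3⟩ := hkey hlt
  exact ⟨h1, h2, h3.trans hetaS.symm⟩
end
end

section
/- Let S be the set of skew-symmetric matrix polynomials in P_m(ℂ^{n×n}) and let P ∈ S be regular. Let λ ∈ ℂ and x ∈ ℂⁿ with x^H x = 1, and set r := −P(λ)x and Λ_m := (1, λ, …, λ^m)ᵀ. Then η_F^S(λ, x, P) = √2 · η(λ, x, P) and η_2^S(λ, x, P) = η(λ, x, P) = ‖r‖₂/‖Λ_m‖₂. Moreover, the skew-symmetric polynomial ΔP(z) := Σ_{j=0}^m z^j ΔA_j with ΔA_j := −(conj(λ^j)/‖Λ_m‖₂²)·(x̄ rᵀ − r x^H) satisfies P(λ)x + ΔP(λ)x = 0, |||ΔP|||_F = η_F^S(λ, x, P), and |||ΔP|||₂ = η_2^S(λ, x, P). -/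
open scoped ComplexConjugate
open Matrix

noncomputable section

variable {ι : Type*} [Fintype ι] [DecidableEq ι]

/-- The class of skew-symmetric matrix polynomials. -/
def SkewSymPoly {ι : Type*} [Fintype ι] [DecidableEq ι] {m : ℕ} :
    Set (Fin (m+1) → Matrix ι ι ℂ) := {B | ∀ j, (B j)ᵀ = -(B j)}

namespace SBE

/-! ### Euclidean space helpers -/

def ev {n : ℕ} (v : Fin n → ℂ) : EuclideanSpace ℂ (Fin n) := (WithLp.equiv 2 _).symm v

lemma ev_smul {n : ℕ} (c : ℂ) (v : Fin n → ℂ) : ev (c • v) = c • ev v := rfl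

lemma ev_sum {n k : ℕ} (f : Fin k → Fin n → ℂ) : ev (∑ j, f j) = ∑ j, ev (f j) := by
  unfold ev
  induction' (Finset.univ : Finset (Fin k)) using Finset.induction with a s ha ih
  · rfl
  · rw [Finset.sum_insert ha, Finset.sum_insert ha, ← ih]; rfl

lemma norm_ev {n : ℕ} (v : Fin n → ℂ) : ‖ev v‖ = vecNorm v := by
  rw [EuclideanSpace.norm_eq]; rfl

lemma inner_ev {n : ℕ} (u v : Fin n → ℂ) :
    (inner ℂ (ev u) (ev v) : ℂ) = ∑ i, conj (u i) * v i := by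
  rw [PiLp.inner_apply]; exact Finset.sum_congr rfl fun i _ => mul_comm _ _

lemma vecNormSq_nonneg {n : ℕ} (v : Fin n → ℂ) : 0 ≤ vecNormSq v :=
  Finset.sum_nonneg fun _ _ => by positivity

lemma vecNorm_nonneg {n : ℕ} (v : Fin n → ℂ) : 0 ≤ vecNorm v := Real.sqrt_nonneg _

lemma sq_vecNorm {n : ℕ} (v : Fin n → ℂ) : vecNorm v ^ 2 = vecNormSq v :=
  Real.sq_sqrt (vecNormSq_nonneg v)

lemma cs_sum {n : ℕ} (f g : Fin n → ℂ) :
    ‖∑ k, f k * g k‖ ≤ Real.sqrt (∑ k, ‖f k‖ ^ 2) * Real.sqrt (∑ k, ‖g k‖ ^ 2) := by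
  have h := norm_inner_le_norm (𝕜 := ℂ) (ev (fun k => conj (f k))) (ev g)
  rw [inner_ev, norm_ev, norm_ev] at h
  simpa [vecNorm, vecNormSq] using h

lemma cs_sum_sq {n : ℕ} (f g : Fin n → ℂ) :
    ‖∑ k, f k * g k‖ ^ 2 ≤ (∑ k, ‖f k‖ ^ 2) * (∑ k, ‖g k‖ ^ 2) := by
  have h := cs_sum f g
  have h2 := mul_self_le_mul_self (norm_nonneg _) h
  calc ‖∑ k, f k * g k‖ ^ 2 = ‖∑ k, f k * g k‖ * ‖∑ k, f k * g k‖ := sq _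
    _ ≤ _ := h2.trans_eq ?_
  rw [mul_mul_mul_comm, Real.mul_self_sqrt, Real.mul_self_sqrt] <;>
    exact Finset.sum_nonneg fun _ _ => by positivity

lemma bessel2 {E : Type*} [NormedAddCommGroup E] [InnerProductSpace ℂ E]
    (x u v : E) (hx : ‖x‖ = 1) (hux : (inner ℂ u x : ℂ) = 0) :
    ‖(inner ℂ u v : ℂ)‖ ^ 2 + ‖u‖ ^ 2 * ‖(inner ℂ x v : ℂ)‖ ^ 2 ≤ ‖u‖ ^ 2 * ‖v‖ ^ 2 := by
  set c : ℂ := inner ℂ x v with hc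
  set w : E := v - c • x with hw
  have hxw : (inner ℂ x w : ℂ) = 0 := by
    simp [hw, inner_sub_right, inner_smul_right, ← hc,
      inner_self_eq_norm_sq_to_K (𝕜 := ℂ) x, hx]
  have huw : (inner ℂ u w : ℂ) = inner ℂ u v := by
    simp [hw, inner_sub_right, inner_smul_right, hux]
  have hvx : (inner ℂ v x : ℂ) = conj c := by rw [hc, inner_conj_symm]
  have h2 : (inner ℂ w w : ℂ) = inner ℂ v v - c * conj c := by
    rw [hw, inner_sub_left, inner_smul_left, hxw, ← hw, mul_zero, sub_zero,
      hw, inner_sub_right, inner_smul_right, hvx]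
  have hwn : ‖w‖ ^ 2 = ‖v‖ ^ 2 - ‖c‖ ^ 2 := by
    have h1 : RCLike.re (inner ℂ w w : ℂ) = ‖w‖ ^ 2 := inner_self_eq_norm_sq w
    have h3 : RCLike.re (inner ℂ v v : ℂ) = ‖v‖ ^ 2 := inner_self_eq_norm_sq v
    have h4 : c * conj c = ((‖c‖ : ℂ)) ^ 2 := RCLike.mul_conj c
    rw [← h1, h2, map_sub, h3, h4]
    norm_cast
  have hcs : ‖(inner ℂ u w : ℂ)‖ ≤ ‖u‖ * ‖w‖ := norm_inner_le_norm u w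
  have hcs2 : ‖(inner ℂ u v : ℂ)‖ ^ 2 ≤ ‖u‖ ^ 2 * ‖w‖ ^ 2 := by
    rw [← huw]
    calc ‖(inner ℂ u w : ℂ)‖ ^ 2 ≤ (‖u‖ * ‖w‖) ^ 2 := by
          apply sq_le_sq' _ hcs
          have := norm_nonneg (inner ℂ u w : ℂ)
          nlinarith [mul_nonneg (norm_nonneg u) (norm_nonneg w)]
      _ = ‖u‖ ^ 2 * ‖w‖ ^ 2 := by ring
  rw [hwn] at hcs2
  nlinarith [sq_nonneg (‖u‖ * ‖c‖)]

/-! ### Norm expansion -/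

lemma sub_normsq {n : ℕ} (a b : Fin n → ℂ) :
    ∑ i, ‖a i - b i‖ ^ 2 =
      (∑ i, ‖a i‖ ^ 2) + (∑ i, ‖b i‖ ^ 2) - 2 * RCLike.re (∑ i, conj (a i) * b i) := by
  rw [map_sum, Finset.mul_sum, ← Finset.sum_add_distrib, ← Finset.sum_sub_distrib]
  refine Finset.sum_congr rfl fun i _ => ?_
  have := norm_sub_sq (𝕜 := ℂ) (a i) (b i)
  rw [RCLike.inner_apply] at this
  rw [this]; ring

/-! ### Matrix helpers -/

lemma vecMulVec_mulVec {n : ℕ} (a b v : Fin n → ℂ) :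
    vecMulVec a b *ᵥ v = (b ⬝ᵥ v) • a := by
  funext i
  simp only [Matrix.mulVec, Matrix.vecMulVec_apply, dotProduct, Pi.smul_apply, smul_eq_mul,
    Finset.sum_mul]
  refine Finset.sum_congr rfl fun k _ => by ring

lemma polyEval_mulVec {n m : ℕ} (B : Fin (m+1) → Matrix (Fin n) (Fin n) ℂ) (z : ℂ)
    (v : Fin n → ℂ) :
    polyEval B z *ᵥ v = ∑ j : Fin (m+1), z ^ (j : ℕ) • (B j *ᵥ v) := by
  funext i
  simp only [polyEval, Matrix.mulVec, dotProduct, Matrix.sum_apply, Matrix.smul_apply,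
    Finset.sum_apply, Pi.smul_apply, smul_eq_mul, Finset.sum_mul, Finset.mul_sum]
  rw [Finset.sum_comm]
  exact Finset.sum_congr rfl fun j _ => Finset.sum_congr rfl fun k _ => by ring

lemma polyEval_apply {n m : ℕ} (B : Fin (m+1) → Matrix (Fin n) (Fin n) ℂ) (z : ℂ)
    (i k : Fin n) : polyEval B z i k = ∑ j : Fin (m+1), z ^ (j : ℕ) * (B j) i k := by
  simp [polyEval, Matrix.sum_apply]

lemma clm_ev {n : ℕ} (M : Matrix (Fin n) (Fin n) ℂ) (v : Fin n → ℂ) :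
    Matrix.toEuclideanCLM (𝕜 := ℂ) M (ev v) = ev (M *ᵥ v) := by
  simp [ev]

lemma spec_mulVec {n : ℕ} (M : Matrix (Fin n) (Fin n) ℂ) (v : Fin n → ℂ) :
    vecNorm (M *ᵥ v) ≤ specNorm M * vecNorm v := by
  have h := (Matrix.toEuclideanCLM (𝕜 := ℂ) M).le_opNorm (ev v)
  rwa [clm_ev, norm_ev, norm_ev] at h

lemma spec_le {n : ℕ} (M : Matrix (Fin n) (Fin n) ℂ) (c : ℝ) (hc : 0 ≤ c)
    (h : ∀ v : Fin n → ℂ, vecNorm (M *ᵥ v) ≤ c * vecNorm v) : specNorm M ≤ c := by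
  refine ContinuousLinearMap.opNorm_le_bound _ hc fun w => ?_
  have hw : w = ev ((WithLp.equiv 2 _) w) := rfl
  rw [hw, clm_ev, norm_ev, norm_ev]
  exact h _

set_option synthInstance.maxHeartbeats 1000000 in
lemma spec_smul {n : ℕ} (c : ℂ) (M : Matrix (Fin n) (Fin n) ℂ) :
    specNorm (c • M) = ‖c‖ * specNorm M := by
  have h : Matrix.toEuclideanCLM (𝕜 := ℂ) (c • M) = c • Matrix.toEuclideanCLM (𝕜 := ℂ) M :=
    _root_.map_smul _ c M
  rw [specNorm, h]
  exact norm_smul c (Matrix.toEuclideanCLM (𝕜 := ℂ) M)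

lemma frob_smul {n : ℕ} (c : ℂ) (M : Matrix (Fin n) (Fin n) ℂ) :
    frobNormSq (c • M) = ‖c‖ ^ 2 * frobNormSq M := by
  simp [frobNormSq, Matrix.smul_apply, smul_eq_mul, norm_mul, mul_pow, Finset.mul_sum]

lemma frob_neg {n : ℕ} (M : Matrix (Fin n) (Fin n) ℂ) :
    frobNormSq (-M) = frobNormSq M := by
  simp [frobNormSq]

lemma spec_neg {n : ℕ} (M : Matrix (Fin n) (Fin n) ℂ) :
    specNorm (-M) = specNorm M := by
  unfold specNorm; rw [map_neg, norm_neg]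

lemma frob_mulVec {n : ℕ} (M : Matrix (Fin n) (Fin n) ℂ) (v : Fin n → ℂ) :
    vecNorm (M *ᵥ v) ≤ Real.sqrt (frobNormSq M) * vecNorm v := by
  have hfrob : 0 ≤ frobNormSq M :=
    Finset.sum_nonneg fun _ _ => Finset.sum_nonneg fun _ _ => by positivity
  have h1 : vecNormSq (M *ᵥ v) ≤ frobNormSq M * vecNormSq v := by
    calc vecNormSq (M *ᵥ v) = ∑ i, ‖∑ k, M i k * v k‖ ^ 2 := rfl
      _ ≤ ∑ i, (∑ k, ‖M i k‖ ^ 2) * (∑ k, ‖v k‖ ^ 2) :=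
          Finset.sum_le_sum fun i _ => cs_sum_sq _ _
      _ = frobNormSq M * vecNormSq v := by
          rw [frobNormSq, Finset.sum_mul]; rfl
  have h2 := Real.sqrt_le_sqrt h1
  rw [Real.sqrt_mul hfrob] at h2
  exact h2

lemma eta_eq {n m : ℕ} (N : (Fin (m+1) → Matrix (Fin n) (Fin n) ℂ) → ℝ)
    (S : Set (Fin (m+1) → Matrix (Fin n) (Fin n) ℂ)) (lam : ℂ) (x : Fin n → ℂ)
    (A : Fin (m+1) → Matrix (Fin n) (Fin n) ℂ) (c : ℝ)
    (mem : ∃ ΔB ∈ S, (polyEval A lam + polyEval ΔB lam) *ᵥ x = 0 ∧ N ΔB = c)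
    (lb : ∀ ΔB ∈ S, (polyEval A lam + polyEval ΔB lam) *ᵥ x = 0 → c ≤ N ΔB) :
    eta N S lam x A = c := by
  obtain ⟨B0, hB0S, hB0c, hB0N⟩ := mem
  have hmem : c ∈ {t | ∃ ΔB ∈ S, (polyEval A lam + polyEval ΔB lam) *ᵥ x = 0 ∧ t = N ΔB} :=
    ⟨B0, hB0S, hB0c, hB0N.symm⟩
  refine le_antisymm (csInf_le ⟨c, ?_⟩ hmem) (le_csInf ⟨c, hmem⟩ ?_)
  · rintro t ⟨B, hBS, hBc, rfl⟩; exact lb B hBS hBc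
  · rintro t ⟨B, hBS, hBc, rfl⟩; exact lb B hBS hBc


lemma frobNormSq_nonneg {n : ℕ} (M : Matrix (Fin n) (Fin n) ℂ) : 0 ≤ frobNormSq M :=
  Finset.sum_nonneg fun _ _ => Finset.sum_nonneg fun _ _ => by positivity

lemma normSq_smul_sub {n : ℕ} (a b : ℂ) (u v : Fin n → ℂ) :
    vecNormSq (a • u - b • v) = ‖a‖ ^ 2 * vecNormSq u + ‖b‖ ^ 2 * vecNormSq v
      - 2 * RCLike.re ((conj a * b) * ∑ i, conj (u i) * v i) := by
  have h := sub_normsq (fun i => a * u i) (fun i => b * v i)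
  have e0 : vecNormSq (a • u - b • v) = ∑ i, ‖a * u i - b * v i‖ ^ 2 := by
    refine Finset.sum_congr rfl fun i _ => ?_
    simp [Pi.sub_apply, Pi.smul_apply, smul_eq_mul]
  rw [e0, h]
  congr 1
  · congr 1
    · rw [vecNormSq, Finset.mul_sum]
      exact Finset.sum_congr rfl fun i _ => by rw [norm_mul, mul_pow]
    · rw [vecNormSq, Finset.mul_sum]
      exact Finset.sum_congr rfl fun i _ => by rw [norm_mul, mul_pow]
  · congr 2
    rw [Finset.mul_sum]
    exact Finset.sum_congr rfl fun i _ => by rw [_root_.map_mul]; ring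

end SBE

set_option maxHeartbeats 1000000

/-- Structured backward errors of an approximate eigenpair of a
skew-symmetric matrix polynomial: `η_F^S = √2·η`, `η_2^S = η = ‖r‖₂/‖Λ_m‖₂`, and the
explicitly given skew-symmetric perturbation attains both. -/
theorem skewsymmetric_backward_error {n m : ℕ}
    (A : Fin (m+1) → Matrix (Fin n) (Fin n) ℂ)
    (hA : A ∈ SkewSymPoly) (hreg : Regular A)
    (lam : ℂ) (x : Fin n → ℂ) (hx : star x ⬝ᵥ x = 1)
    (r : Fin n → ℂ) (hr : r = -(polyEval A lam *ᵥ x))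
    (ΔA : Fin (m+1) → Matrix (Fin n) (Fin n) ℂ)
    (hΔ : ∀ j : Fin (m+1),
      ΔA j = -((conj (lam ^ (j : ℕ)) / (lamNormSq m lam : ℂ)) •
        (vecMulVec (star x) r - vecMulVec r (star x)))) :
    eta polyNormF SkewSymPoly lam x A = Real.sqrt 2 * eta polyNormF Set.univ lam x A ∧
    eta polyNorm2 SkewSymPoly lam x A = eta polyNorm2 Set.univ lam x A ∧
    eta polyNorm2 Set.univ lam x A = vecNorm r / Real.sqrt (lamNormSq m lam) ∧
    ΔA ∈ SkewSymPoly ∧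
    (polyEval A lam + polyEval ΔA lam) *ᵥ x = 0 ∧
    polyNormF ΔA = eta polyNormF SkewSymPoly lam x A ∧
    polyNorm2 ΔA = eta polyNorm2 SkewSymPoly lam x A := by
  classical
  set X : Fin n → ℂ := star x with hXdef
  set K : Matrix (Fin n) (Fin n) ℂ := vecMulVec X r - vecMulVec r X with hKdef
  set L : ℝ := lamNormSq m lam with hLdef
  set R : ℝ := vecNormSq r with hRdef
  have hRnn : 0 ≤ R := SBE.vecNormSq_nonneg r
  have hLpos : 0 < L := by
    rw [hLdef, lamNormSq]
    refine Finset.sum_pos' (fun j _ => by positivity) ⟨0, Finset.mem_univ _, ?_⟩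
    simp
  have hL0 : L ≠ 0 := hLpos.ne'
  have hsqL : 0 < Real.sqrt L := Real.sqrt_pos.mpr hLpos
  have hLC : (L : ℂ) ≠ 0 := by
    simpa using Complex.ofReal_ne_zero.mpr hLpos.ne'
  have hLsum : (∑ j : Fin (m+1), ‖lam ^ (j : ℕ)‖ ^ 2) = L := by rw [hLdef]; rfl
  have hXi : ∀ i, X i = conj (x i) := fun i => rfl
  have hXconj : ∀ i, conj (X i) = x i := fun i => by
    rw [hXi i]; exact Complex.conj_conj _
  have hxsum : ∑ i, conj (x i) * x i = 1 := by
    have h := hx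
    simp only [dotProduct] at h
    rw [← h]
    exact Finset.sum_congr rfl fun i _ => by rw [← hXi i]
  have hxn : vecNormSq x = 1 := by
    have h : ((vecNormSq x : ℝ) : ℂ) = 1 := by
      rw [vecNormSq]
      push_cast
      rw [← hxsum]
      refine Finset.sum_congr rfl fun i _ => ?_
      rw [RCLike.conj_mul]
      norm_cast
    exact_mod_cast h
  have hxn' : (∑ i, ‖x i‖ ^ 2) = 1 := hxn
  have hRsum : (∑ i, ‖r i‖ ^ 2) = R := hRdef.symm
  have hvnX : vecNormSq X = vecNormSq x := by
    unfold vecNormSq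
    exact Finset.sum_congr rfl fun i _ => by rw [hXi i]; simp
  have hxnorm1 : vecNorm x = 1 := by rw [vecNorm, hxn, Real.sqrt_one]
  have hevx : ‖SBE.ev x‖ = 1 := by rw [SBE.norm_ev, hxnorm1]
  -- skewness of evaluations
  have skew_eval : ∀ B : Fin (m+1) → Matrix (Fin n) (Fin n) ℂ, (∀ j, (B j)ᵀ = -(B j)) →
      (polyEval B lam)ᵀ = -(polyEval B lam) := by
    intro B hB
    rw [polyEval, Matrix.transpose_sum]
    calc (∑ j : Fin (m+1), (lam ^ (j : ℕ) • B j)ᵀ)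
        = ∑ j : Fin (m+1), -(lam ^ (j : ℕ) • B j) := by
          refine Finset.sum_congr rfl fun j _ => ?_
          rw [Matrix.transpose_smul, hB j, smul_neg]
      _ = -(∑ j : Fin (m+1), lam ^ (j : ℕ) • B j) := Finset.sum_neg_distrib _
  have hPt : (polyEval A lam)ᵀ = -(polyEval A lam) := skew_eval A hA
  have hPx : polyEval A lam *ᵥ x = -r := by rw [hr, neg_neg]
  -- orthogonality x ⟂ r (bilinear)
  have hortho : ∑ i, x i * r i = 0 := by
    set P := polyEval A lam with hPdef
    have hPik : ∀ i k, P i k = -(P k i) := by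
      intro i k
      have h := congrFun (congrFun hPt k) i
      simpa [Matrix.transpose_apply, Matrix.neg_apply] using h
    have hT : (∑ i, ∑ k, x i * P i k * x k) = -(∑ i, ∑ k, x i * P i k * x k) := by
      nth_rewrite 1 [Finset.sum_comm]
      rw [← Finset.sum_neg_distrib]
      refine Finset.sum_congr rfl fun i _ => ?_
      rw [← Finset.sum_neg_distrib]
      refine Finset.sum_congr rfl fun k _ => ?_
      rw [hPik k i]
      ring
    have hT0 : (∑ i, ∑ k, x i * P i k * x k) = 0 := by
      linear_combination hT / 2
    have hxr : ∑ i, x i * r i = -(∑ i, ∑ k, x i * P i k * x k) := by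
      rw [hr, ← Finset.sum_neg_distrib]
      refine Finset.sum_congr rfl fun i _ => ?_
      rw [Pi.neg_apply, mul_neg, neg_inj]
      simp only [Matrix.mulVec, dotProduct, Finset.mul_sum]
      exact Finset.sum_congr rfl fun k _ => by ring
    rw [hxr, hT0, neg_zero]
  have hrx : r ⬝ᵥ x = 0 := by
    rw [dotProduct, ← hortho]
    exact Finset.sum_congr rfl fun i _ => mul_comm _ _
  have hXx : X ⬝ᵥ x = 1 := hx
  have hKx : K *ᵥ x = -r := by
    rw [hKdef, Matrix.sub_mulVec, SBE.vecMulVec_mulVec, SBE.vecMulVec_mulVec, hrx, hXx]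
    simp
  have hKt : Kᵀ = -K := by
    rw [hKdef]
    ext i k
    simp only [Matrix.transpose_apply, Matrix.sub_apply, Matrix.neg_apply,
      Matrix.vecMulVec_apply]
    ring
  -- Frobenius norm of K
  have frobK : frobNormSq K = 2 * R := by
    have hrow : ∀ i, (∑ k, ‖K i k‖ ^ 2)
        = ‖x i‖ ^ 2 * R + ‖r i‖ ^ 2 * vecNormSq x
          - 2 * RCLike.re ((x i * r i) * ∑ k, conj (r k) * X k) := by
      intro i
      have e1 : ∀ k, K i k = ((conj (x i)) • r - (r i) • X) k := by
        intro k
        rw [hKdef]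
        simp only [Matrix.sub_apply, Matrix.vecMulVec_apply, Pi.sub_apply, Pi.smul_apply,
          smul_eq_mul]
        rw [hXi i]
      have e2 : (∑ k, ‖K i k‖ ^ 2) = vecNormSq ((conj (x i)) • r - (r i) • X) := by
        exact Finset.sum_congr rfl fun k _ => by rw [e1 k]
      rw [e2, SBE.normSq_smul_sub, hvnX, Complex.conj_conj, RCLike.norm_conj, ← hRdef]
    calc frobNormSq K = ∑ i, (∑ k, ‖K i k‖ ^ 2) := rfl
      _ = ∑ i, (‖x i‖ ^ 2 * R + ‖r i‖ ^ 2 * vecNormSq x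
          - 2 * RCLike.re ((x i * r i) * ∑ k, conj (r k) * X k)) :=
          Finset.sum_congr rfl fun i _ => hrow i
      _ = 2 * R := by
          rw [Finset.sum_sub_distrib, Finset.sum_add_distrib, ← Finset.sum_mul, ← Finset.sum_mul]
          have hre : ∑ i, 2 * RCLike.re ((x i * r i) * ∑ k, conj (r k) * X k) = 0 := by
            have h5 : ∑ i, RCLike.re ((x i * r i) * ∑ k, conj (r k) * X k)
                = RCLike.re ((∑ i, x i * r i) * ∑ k, conj (r k) * X k) := by
              rw [Finset.sum_mul, ← map_sum]
            rw [← Finset.mul_sum, h5, hortho, zero_mul, map_zero, mul_zero]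
          rw [hre, sub_zero, hxn', hRsum, hxn]
          ring
  -- spectral norm of K
  have hKv : ∀ v : Fin n → ℂ, vecNormSq (K *ᵥ v) ≤ R * vecNormSq v := by
    intro v
    have hKvr : K *ᵥ v = (r ⬝ᵥ v) • X - (X ⬝ᵥ v) • r := by
      rw [hKdef, Matrix.sub_mulVec, SBE.vecMulVec_mulVec, SBE.vecMulVec_mulVec]
    have h0 : ∑ i, conj (X i) * r i = 0 := by
      rw [← hortho]
      exact Finset.sum_congr rfl fun i _ => by rw [hXconj i]
    have h1 : vecNormSq (K *ᵥ v) = ‖r ⬝ᵥ v‖ ^ 2 * vecNormSq x + ‖X ⬝ᵥ v‖ ^ 2 * R := by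
      rw [hKvr, SBE.normSq_smul_sub, hvnX, h0, mul_zero, map_zero, mul_zero, sub_zero,
        ← hRdef]
    have horth1 : (inner ℂ (SBE.ev (fun i => conj (r i))) (SBE.ev x) : ℂ) = 0 := by
      rw [SBE.inner_ev, ← hortho]
      exact Finset.sum_congr rfl fun i _ => by rw [Complex.conj_conj]; ring
    have hb := SBE.bessel2 (SBE.ev x) (SBE.ev (fun i => conj (r i))) (SBE.ev v) hevx horth1
    rw [SBE.inner_ev, SBE.inner_ev] at hb
    have e1 : (∑ i, conj (conj (r i)) * v i) = r ⬝ᵥ v := by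
      rw [dotProduct]
      exact Finset.sum_congr rfl fun i _ => by rw [Complex.conj_conj]
    have e2 : (∑ i, conj (x i) * v i) = X ⬝ᵥ v := by
      rw [dotProduct]
      exact Finset.sum_congr rfl fun i _ => by rw [← hXi i]
    have e3 : ‖SBE.ev (fun i => conj (r i))‖ ^ 2 = R := by
      rw [SBE.norm_ev, SBE.sq_vecNorm, hRdef]
      unfold vecNormSq
      exact Finset.sum_congr rfl fun i _ => by simp
    have e4 : ‖SBE.ev v‖ ^ 2 = vecNormSq v := by rw [SBE.norm_ev, SBE.sq_vecNorm]
    rw [e1, e2, e3, e4] at hb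
    rw [h1, hxn, mul_one]
    linarith
  have specK : specNorm K = Real.sqrt R := by
    apply le_antisymm
    · apply SBE.spec_le _ _ (Real.sqrt_nonneg R)
      intro v
      have h := Real.sqrt_le_sqrt (hKv v)
      rw [Real.sqrt_mul hRnn] at h
      exact h
    · have h := SBE.spec_mulVec K x
      rw [hKx, hxnorm1, mul_one] at h
      have e : vecNorm (-r) = Real.sqrt R := by
        rw [vecNorm, hRdef]
        congr 1
        unfold vecNormSq
        simp
      rwa [e] at h
  -- coefficient sums
  have hLsumC : ∑ j : Fin (m+1), lam ^ (j : ℕ) * conj (lam ^ (j : ℕ)) = (L : ℂ) := by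
    rw [← hLsum]
    push_cast
    exact Finset.sum_congr rfl fun j _ => by rw [RCLike.mul_conj]; norm_cast
  have hcsum : ∑ j : Fin (m+1), lam ^ (j : ℕ) * (conj (lam ^ (j : ℕ)) / (L : ℂ)) = 1 := by
    calc ∑ j : Fin (m+1), lam ^ (j : ℕ) * (conj (lam ^ (j : ℕ)) / (L : ℂ))
        = (∑ j : Fin (m+1), lam ^ (j : ℕ) * conj (lam ^ (j : ℕ))) / (L : ℂ) := by
          rw [Finset.sum_div]
          exact Finset.sum_congr rfl fun j _ => by ring
      _ = 1 := by rw [hLsumC, div_self hLC]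
  have hΔeval : polyEval ΔA lam = -K := by
    rw [polyEval]
    calc ∑ j : Fin (m+1), lam ^ (j : ℕ) • ΔA j
        = ∑ j : Fin (m+1), -((lam ^ (j : ℕ) * (conj (lam ^ (j : ℕ)) / (L : ℂ))) • K) := by
          refine Finset.sum_congr rfl fun j _ => ?_
          rw [hΔ j, smul_neg, smul_smul]
      _ = -((∑ j : Fin (m+1), lam ^ (j : ℕ) * (conj (lam ^ (j : ℕ)) / (L : ℂ))) • K) := by
          rw [Finset.sum_neg_distrib, Finset.sum_smul]
      _ = -K := by rw [hcsum, one_smul]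
  have hcon : (polyEval A lam + polyEval ΔA lam) *ᵥ x = 0 := by
    rw [Matrix.add_mulVec, hPx, hΔeval, Matrix.neg_mulVec, hKx]
    simp
  have hskewΔ : ΔA ∈ SkewSymPoly := by
    intro j
    rw [hΔ j, Matrix.transpose_neg, Matrix.transpose_smul, hKt]
    simp
  -- coefficient norms
  have hcj : ∀ j : Fin (m+1), ‖conj (lam ^ (j : ℕ)) / (L : ℂ)‖ ^ 2 = ‖lam ^ (j : ℕ)‖ ^ 2 / L ^ 2 := by
    intro j
    rw [norm_div, RCLike.norm_conj, Complex.norm_real, Real.norm_eq_abs,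
      abs_of_nonneg hLpos.le, div_pow]
  -- norms of the perturbation ΔA
  have hsumF : ∑ j : Fin (m+1), frobNormSq (ΔA j) = 2 * R / L := by
    have h : ∀ j : Fin (m+1), frobNormSq (ΔA j) = ‖lam ^ (j : ℕ)‖ ^ 2 / L ^ 2 * (2 * R) := by
      intro j
      rw [hΔ j, SBE.frob_neg, SBE.frob_smul, frobK, hcj]
    rw [Finset.sum_congr rfl fun j _ => h j, ← Finset.sum_mul, ← Finset.sum_div, hLsum]
    field_simp
  have hnormFΔ : polyNormF ΔA = Real.sqrt 2 * Real.sqrt R / Real.sqrt L := by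
    rw [polyNormF, hsumF, Real.sqrt_div (by positivity), Real.sqrt_mul (by norm_num)]
  have hsum2 : ∑ j : Fin (m+1), specNorm (ΔA j) ^ 2 = R / L := by
    have h : ∀ j : Fin (m+1), specNorm (ΔA j) ^ 2 = ‖lam ^ (j : ℕ)‖ ^ 2 / L ^ 2 * R := by
      intro j
      rw [hΔ j, SBE.spec_neg, SBE.spec_smul, specK, mul_pow, Real.sq_sqrt hRnn, hcj]
    rw [Finset.sum_congr rfl fun j _ => h j, ← Finset.sum_mul, ← Finset.sum_div, hLsum]
    field_simp
  have hnormΔ2 : polyNorm2 ΔA = Real.sqrt R / Real.sqrt L := by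
    rw [polyNorm2, hsum2, Real.sqrt_div hRnn]
  -- the unstructured optimal perturbation (for Frobenius norm)
  set B1 : Fin (m+1) → Matrix (Fin n) (Fin n) ℂ :=
    fun j => (conj (lam ^ (j : ℕ)) / (L : ℂ)) • vecMulVec r X with hB1def
  have hB1j : ∀ j : Fin (m+1), B1 j = (conj (lam ^ (j : ℕ)) / (L : ℂ)) • vecMulVec r X :=
    fun j => rfl
  have hB1eval : polyEval B1 lam = vecMulVec r X := by
    rw [polyEval]
    calc ∑ j : Fin (m+1), lam ^ (j : ℕ) • B1 j
        = ∑ j : Fin (m+1), (lam ^ (j : ℕ) * (conj (lam ^ (j : ℕ)) / (L : ℂ))) • vecMulVec r X := by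
          refine Finset.sum_congr rfl fun j _ => ?_
          rw [hB1j j, smul_smul]
      _ = (∑ j : Fin (m+1), lam ^ (j : ℕ) * (conj (lam ^ (j : ℕ)) / (L : ℂ))) • vecMulVec r X := by
          rw [Finset.sum_smul]
      _ = vecMulVec r X := by rw [hcsum, one_smul]
  have hB1con : (polyEval A lam + polyEval B1 lam) *ᵥ x = 0 := by
    rw [Matrix.add_mulVec, hPx, hB1eval, SBE.vecMulVec_mulVec, hXx, one_smul]
    simp
  have hfrobB1 : frobNormSq (vecMulVec r X) = R := by
    calc frobNormSq (vecMulVec r X) = ∑ i, ∑ k, ‖r i * X k‖ ^ 2 := by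
          unfold frobNormSq
          exact Finset.sum_congr rfl fun i _ => Finset.sum_congr rfl fun k _ => by
            rw [Matrix.vecMulVec_apply]
      _ = ∑ i, ‖r i‖ ^ 2 * vecNormSq x := by
          refine Finset.sum_congr rfl fun i _ => ?_
          rw [vecNormSq, Finset.mul_sum]
          refine Finset.sum_congr rfl fun k _ => ?_
          rw [norm_mul, mul_pow, hXi k]
          simp
      _ = R := by rw [← Finset.sum_mul, hxn, mul_one, hRsum]
  have hNB1 : polyNormF B1 = Real.sqrt R / Real.sqrt L := by
    have h : ∀ j : Fin (m+1), frobNormSq (B1 j) = ‖lam ^ (j : ℕ)‖ ^ 2 / L ^ 2 * R := by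
      intro j
      rw [hB1j j, SBE.frob_smul, hfrobB1, hcj]
    rw [polyNormF, Finset.sum_congr rfl fun j _ => h j, ← Finset.sum_mul, ← Finset.sum_div,
      hLsum]
    rw [show L / L ^ 2 * R = R / L by field_simp]
    rw [Real.sqrt_div hRnn]
  -- constraint reformulation
  have hconstr_eq : ∀ ΔB : Fin (m+1) → Matrix (Fin n) (Fin n) ℂ,
      (polyEval A lam + polyEval ΔB lam) *ᵥ x = 0 → polyEval ΔB lam *ᵥ x = r := by
    intro ΔB h
    rw [Matrix.add_mulVec, hPx] at h
    exact (neg_add_eq_zero.mp h).symm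
  -- generic lower bound
  have lb_gen : ∀ (ΔB : Fin (m+1) → Matrix (Fin n) (Fin n) ℂ) (nj : Fin (m+1) → ℝ),
      polyEval ΔB lam *ᵥ x = r → (∀ j, 0 ≤ nj j) → (∀ j, vecNorm (ΔB j *ᵥ x) ≤ nj j) →
      Real.sqrt R ≤ Real.sqrt L * Real.sqrt (∑ j, nj j ^ 2) := by
    intro ΔB nj hBx hnj0 hnjb
    have h1 : vecNorm r ≤ ∑ j : Fin (m+1), ‖lam ^ (j : ℕ)‖ * vecNorm (ΔB j *ᵥ x) := by
      rw [← hBx]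
      calc vecNorm (polyEval ΔB lam *ᵥ x) = ‖SBE.ev (polyEval ΔB lam *ᵥ x)‖ :=
            (SBE.norm_ev _).symm
        _ = ‖∑ j : Fin (m+1), lam ^ (j : ℕ) • SBE.ev (ΔB j *ᵥ x)‖ := by
            rw [SBE.polyEval_mulVec, SBE.ev_sum]
            exact congrArg _ (Finset.sum_congr rfl fun j _ => SBE.ev_smul _ _)
        _ ≤ ∑ j : Fin (m+1), ‖lam ^ (j : ℕ) • SBE.ev (ΔB j *ᵥ x)‖ := norm_sum_le _ _
        _ = ∑ j : Fin (m+1), ‖lam ^ (j : ℕ)‖ * vecNorm (ΔB j *ᵥ x) := by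
            refine Finset.sum_congr rfl fun j _ => ?_
            rw [norm_smul, SBE.norm_ev]
    have h2 : (∑ j : Fin (m+1), ‖lam ^ (j : ℕ)‖ * vecNorm (ΔB j *ᵥ x))
        ≤ ∑ j : Fin (m+1), ‖lam ^ (j : ℕ)‖ * nj j :=
      Finset.sum_le_sum fun j _ => mul_le_mul_of_nonneg_left (hnjb j) (norm_nonneg _)
    have h3 : (∑ j : Fin (m+1), ‖lam ^ (j : ℕ)‖ * nj j)
        ≤ Real.sqrt L * Real.sqrt (∑ j, nj j ^ 2) := by
      have cs := Finset.sum_mul_sq_le_sq_mul_sq Finset.univ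
        (fun j : Fin (m+1) => ‖lam ^ (j : ℕ)‖) nj
      rw [hLsum] at cs
      have hnn : 0 ≤ ∑ j : Fin (m+1), ‖lam ^ (j : ℕ)‖ * nj j :=
        Finset.sum_nonneg fun j _ => mul_nonneg (norm_nonneg _) (hnj0 j)
      have hynn : 0 ≤ L * ∑ j, nj j ^ 2 :=
        mul_nonneg hLpos.le (Finset.sum_nonneg fun j _ => by positivity)
      have h4 : (∑ j : Fin (m+1), ‖lam ^ (j : ℕ)‖ * nj j)
          ≤ Real.sqrt (L * ∑ j, nj j ^ 2) := by
        rw [Real.le_sqrt hnn hynn]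
        exact cs
      rwa [Real.sqrt_mul hLpos.le] at h4
    have hvr : vecNorm r = Real.sqrt R := by rw [vecNorm, hRdef]
    rw [← hvr]
    exact h1.trans (h2.trans h3)
  -- Frobenius lower bound (unstructured)
  have lbF : ∀ ΔB : Fin (m+1) → Matrix (Fin n) (Fin n) ℂ,
      (polyEval A lam + polyEval ΔB lam) *ᵥ x = 0 →
      Real.sqrt R / Real.sqrt L ≤ polyNormF ΔB := by
    intro ΔB hc
    have hBx := hconstr_eq ΔB hc
    have h := lb_gen ΔB (fun j => Real.sqrt (frobNormSq (ΔB j))) hBx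
      (fun j => Real.sqrt_nonneg _)
      (fun j => by simpa [hxnorm1] using SBE.frob_mulVec (ΔB j) x)
    rw [Finset.sum_congr rfl fun j _ => Real.sq_sqrt (SBE.frobNormSq_nonneg (ΔB j))] at h
    rw [div_le_iff₀ hsqL, polyNormF]
    linarith [h]
  -- spectral lower bound
  have lb2 : ∀ ΔB : Fin (m+1) → Matrix (Fin n) (Fin n) ℂ,
      (polyEval A lam + polyEval ΔB lam) *ᵥ x = 0 →
      Real.sqrt R / Real.sqrt L ≤ polyNorm2 ΔB := by
    intro ΔB hc
    have hBx := hconstr_eq ΔB hc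
    have h := lb_gen ΔB (fun j => specNorm (ΔB j)) hBx
      (fun j => norm_nonneg _)
      (fun j => by simpa [hxnorm1] using SBE.spec_mulVec (ΔB j) x)
    rw [div_le_iff₀ hsqL, polyNorm2]
    linarith [h]
  -- skew-structured Frobenius lower bound
  have lbFskew : ∀ ΔB ∈ (SkewSymPoly : Set (Fin (m+1) → Matrix (Fin n) (Fin n) ℂ)),
      (polyEval A lam + polyEval ΔB lam) *ᵥ x = 0 →
      Real.sqrt 2 * Real.sqrt R / Real.sqrt L ≤ polyNormF ΔB := by
    intro ΔB hskew hc
    by_cases hR0 : R = 0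
    · rw [hR0]
      simp only [Real.sqrt_zero, mul_zero, zero_div]
      exact Real.sqrt_nonneg _
    have hRpos : 0 < R := lt_of_le_of_ne hRnn (Ne.symm hR0)
    set S := polyEval ΔB lam with hSdef
    have hSx : S *ᵥ x = r := hconstr_eq ΔB hc
    have hSt : Sᵀ = -S := skew_eval ΔB hskew
    set b : Fin n → ℂ := fun k => conj (r k) with hbdef
    have hbk : ∀ k, b k = conj (r k) := fun k => rfl
    clear_value S b
    have hSTx : Sᵀ *ᵥ x = -r := by rw [hSt, Matrix.neg_mulVec, hSx]
    have hcol : ∀ k, ∑ i, S i k * x i = -(r k) := by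
      intro k
      have h := congrFun hSTx k
      simpa [Matrix.mulVec, dotProduct, Matrix.transpose_apply] using h
    have hxSb : ∑ i, x i * (S *ᵥ b) i = -(R : ℂ) := by
      calc ∑ i, x i * (S *ᵥ b) i = ∑ i, ∑ k, x i * (S i k * b k) := by
            refine Finset.sum_congr rfl fun i _ => ?_
            simp only [Matrix.mulVec, dotProduct, Finset.mul_sum]
        _ = ∑ k, (∑ i, S i k * x i) * b k := by
            rw [Finset.sum_comm]
            refine Finset.sum_congr rfl fun k _ => ?_
            rw [Finset.sum_mul]
            exact Finset.sum_congr rfl fun i _ => by ring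
        _ = ∑ k, -(r k * conj (r k)) := by
            refine Finset.sum_congr rfl fun k _ => by rw [hcol k, hbk k]; ring
        _ = -(R : ℂ) := by
            rw [Finset.sum_neg_distrib, neg_inj, hRdef, vecNormSq]
            push_cast
            exact Finset.sum_congr rfl fun k _ => by rw [RCLike.mul_conj]; norm_cast
    have hSbR : R ^ 2 ≤ vecNormSq (S *ᵥ b) := by
      have hcs := SBE.cs_sum x (fun i => (S *ᵥ b) i)
      rw [hxSb] at hcs
      have e : ‖(-(R : ℂ))‖ = R := by
        rw [norm_neg, Complex.norm_real, Real.norm_eq_abs, abs_of_nonneg hRnn]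
      rw [e] at hcs
      have e2 : Real.sqrt (∑ k, ‖x k‖ ^ 2) = 1 := by
        rw [show (∑ k, ‖x k‖ ^ 2) = vecNormSq x from rfl, hxn, Real.sqrt_one]
      rw [e2, one_mul] at hcs
      exact (Real.le_sqrt hRnn (SBE.vecNormSq_nonneg _)).mp hcs
    have hrowb : ∀ i, ‖(S *ᵥ b) i‖ ^ 2 + R * ‖r i‖ ^ 2 ≤ R * (∑ k, ‖S i k‖ ^ 2) := by
      intro i
      have horth2 : (inner ℂ (SBE.ev b) (SBE.ev x) : ℂ) = 0 := by
        rw [SBE.inner_ev, ← hortho]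
        refine Finset.sum_congr rfl fun k _ => ?_
        rw [hbk k, Complex.conj_conj]
        ring
      have hb2 := SBE.bessel2 (SBE.ev x) (SBE.ev b) (SBE.ev (fun k => conj (S i k))) hevx horth2
      rw [SBE.inner_ev, SBE.inner_ev] at hb2
      have e1 : (∑ k, conj (b k) * conj (S i k)) = conj ((S *ᵥ b) i) := by
        have h0 : (S *ᵥ b) i = ∑ k, S i k * b k := by
          simp only [Matrix.mulVec, dotProduct]
        rw [h0, map_sum]
        exact Finset.sum_congr rfl fun k _ => by rw [_root_.map_mul]; ring
      have e2 : (∑ k, conj (x k) * conj (S i k)) = conj (r i) := by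
        have h0 : (S *ᵥ x) i = ∑ k, S i k * x k := by
          simp only [Matrix.mulVec, dotProduct]
        have h1 : (∑ k, conj (x k) * conj (S i k)) = conj ((S *ᵥ x) i) := by
          rw [h0, map_sum]
          exact Finset.sum_congr rfl fun k _ => by rw [_root_.map_mul]; ring
        rw [h1, hSx]
      have e3 : ‖SBE.ev b‖ ^ 2 = R := by
        rw [SBE.norm_ev, SBE.sq_vecNorm, hRdef]
        unfold vecNormSq
        exact Finset.sum_congr rfl fun k _ => by rw [hbk k]; simp
      have e4 : ‖SBE.ev (fun k => conj (S i k))‖ ^ 2 = ∑ k, ‖S i k‖ ^ 2 := by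
        rw [SBE.norm_ev, SBE.sq_vecNorm]
        unfold vecNormSq
        exact Finset.sum_congr rfl fun k _ => by simp
      rw [e1, e2, e3, e4] at hb2
      rwa [RCLike.norm_conj, RCLike.norm_conj] at hb2
    have hfrobS : 2 * R ≤ frobNormSq S := by
      have hsum := Finset.sum_le_sum fun i (_ : i ∈ Finset.univ) => hrowb i
      rw [Finset.sum_add_distrib, ← Finset.mul_sum, ← Finset.mul_sum] at hsum
      have e1 : (∑ i, ‖(S *ᵥ b) i‖ ^ 2) = vecNormSq (S *ᵥ b) := rfl
      have e2 : (∑ i, ‖r i‖ ^ 2) = R := hRdef.symm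
      have e3 : (∑ i, ∑ k, ‖S i k‖ ^ 2) = frobNormSq S := rfl
      rw [e1, e2, e3] at hsum
      nlinarith [hSbR]
    have hfrobChain : frobNormSq S ≤ L * ∑ j, frobNormSq (ΔB j) := by
      have hentry : ∀ i k, ‖S i k‖ ^ 2 ≤ L * ∑ j : Fin (m+1), ‖(ΔB j) i k‖ ^ 2 := by
        intro i k
        have h := SBE.cs_sum_sq (fun j : Fin (m+1) => lam ^ (j : ℕ)) (fun j => (ΔB j) i k)
        rw [hLsum] at h
        calc ‖S i k‖ ^ 2 = ‖∑ j : Fin (m+1), lam ^ (j : ℕ) * (ΔB j) i k‖ ^ 2 := by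
              rw [hSdef, SBE.polyEval_apply]
          _ ≤ _ := h
      calc frobNormSq S = ∑ i, ∑ k, ‖S i k‖ ^ 2 := rfl
        _ ≤ ∑ i, ∑ k, L * ∑ j : Fin (m+1), ‖(ΔB j) i k‖ ^ 2 :=
            Finset.sum_le_sum fun i _ => Finset.sum_le_sum fun k _ => hentry i k
        _ = L * ∑ j, frobNormSq (ΔB j) := by
            unfold frobNormSq
            simp only [← Finset.mul_sum]
            congr 1
            calc ∑ i : Fin n, ∑ k : Fin n, ∑ j : Fin (m+1), ‖(ΔB j) i k‖ ^ 2
                = ∑ i : Fin n, ∑ j : Fin (m+1), ∑ k : Fin n, ‖(ΔB j) i k‖ ^ 2 :=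
                  Finset.sum_congr rfl fun i _ => Finset.sum_comm
              _ = ∑ j : Fin (m+1), ∑ i : Fin n, ∑ k : Fin n, ‖(ΔB j) i k‖ ^ 2 :=
                  Finset.sum_comm
    have hT : 2 * R / L ≤ ∑ j, frobNormSq (ΔB j) := by
      rw [div_le_iff₀ hLpos]
      calc 2 * R ≤ frobNormSq S := hfrobS
        _ ≤ L * ∑ j, frobNormSq (ΔB j) := hfrobChain
        _ = (∑ j, frobNormSq (ΔB j)) * L := mul_comm _ _
    have h := Real.sqrt_le_sqrt hT
    rw [Real.sqrt_div (by positivity : (0:ℝ) ≤ 2*R), Real.sqrt_mul (by norm_num : (0:ℝ) ≤ 2)] at h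
    rw [polyNormF]
    exact h
  -- eta evaluations
  have eFuniv : eta polyNormF Set.univ lam x A = Real.sqrt R / Real.sqrt L :=
    SBE.eta_eq _ _ _ _ _ _ ⟨B1, Set.mem_univ _, hB1con, hNB1⟩ fun ΔB _ hc => lbF ΔB hc
  have e2univ : eta polyNorm2 Set.univ lam x A = Real.sqrt R / Real.sqrt L :=
    SBE.eta_eq _ _ _ _ _ _ ⟨ΔA, Set.mem_univ _, hcon, hnormΔ2⟩ fun ΔB _ hc => lb2 ΔB hc
  have e2skew : eta polyNorm2 SkewSymPoly lam x A = Real.sqrt R / Real.sqrt L :=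
    SBE.eta_eq _ _ _ _ _ _ ⟨ΔA, hskewΔ, hcon, hnormΔ2⟩ fun ΔB _ hc => lb2 ΔB hc
  have eFskew : eta polyNormF SkewSymPoly lam x A = Real.sqrt 2 * Real.sqrt R / Real.sqrt L :=
    SBE.eta_eq _ _ _ _ _ _ ⟨ΔA, hskewΔ, hcon, hnormFΔ⟩ lbFskew
  refine ⟨?_, ?_, ?_, hskewΔ, hcon, ?_, ?_⟩
  · rw [eFskew, eFuniv]; ring
  · rw [e2skew, e2univ]
  · rw [e2univ, vecNorm, ← hRdef]
  · rw [hnormFΔ, eFskew]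
  · rw [hnormΔ2, e2skew]
end
end
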